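/- arXiv:1806.04842 — 6 statements merged into one kernel-verified Lean document; each statement's English description precedes it below -/
import Mathlib

section
/- Per-step energy estimate for the backward Euler scheme: Suppose a sequence (U^n)_{n=0}^N in H and data f^1,…,f^N ∈ H satisfy, for every 1 ≤ n ≤ N and every v ∈ H, ((U^n − U^{n−1})/Δt, v) + A(U^n, v) + Δt Σ_{i=1}^n ω_{n,i} B(U^i, v) = (f^n, v). Then for every 1 ≤ n ≤ N: ‖U^n‖² + ‖U^n − U^{n−1}‖² + ν₀ Δt ‖U^n‖₁² ≤ ‖U^{n−1}‖² + (μ₀² K₁² t_n / ν₀) Δt² Σ_{i=1}^n ‖U^i‖₁² + Δt ‖f^n‖² + Δt ‖U^n‖². -/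
open scoped BigOperators RealInnerProductSpace

/-- Per-step energy estimate (3.4) for the backward Euler scheme. -/
theorem per_step_energy_estimate
    {H : Type*} [NormedAddCommGroup H] [InnerProductSpace ℝ H]
    (norm1 : H → ℝ) (hnorm1 : ∀ x, 0 ≤ norm1 x)
    (A : H →ₗ[ℝ] H →ₗ[ℝ] ℝ) (ν₀ : ℝ) (hν₀ : 0 < ν₀)
    (hcoer : ∀ v, ν₀ * (norm1 v) ^ 2 ≤ A v v)
    (Δt : ℝ) (hΔt : 0 < Δt) (N : ℕ) (hN : 1 ≤ N)
    (ω : ℕ → ℕ → ℝ) (K₁ : ℝ) (hK₁ : 0 < K₁)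
    (hω : ∀ n i, 1 ≤ i → i ≤ n → n ≤ N → |ω n i| ≤ K₁)
    (B : H → H → ℝ) (μ₀ : ℝ) (hμ₀ : 0 < μ₀)
    (hB : ∀ u v, |B u v| ≤ μ₀ * norm1 u * norm1 v)
    (U f : ℕ → H)
    (hscheme : ∀ n, 1 ≤ n → n ≤ N → ∀ v : H,
      ⟪U n - U (n - 1), v⟫ / Δt + A (U n) v
        + Δt * ∑ i ∈ Finset.Icc 1 n, ω n i * B (U i) v = ⟪f n, v⟫) :
    ∀ n, 1 ≤ n → n ≤ N →
      ‖U n‖ ^ 2 + ‖U n - U (n - 1)‖ ^ 2 + ν₀ * Δt * (norm1 (U n)) ^ 2 ≤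
        ‖U (n - 1)‖ ^ 2
          + (μ₀ ^ 2 * K₁ ^ 2 * ((n : ℝ) * Δt) / ν₀) * Δt ^ 2
              * ∑ i ∈ Finset.Icc 1 n, (norm1 (U i)) ^ 2
          + Δt * ‖f n‖ ^ 2 + Δt * ‖U n‖ ^ 2 := by
  intro n hn1 hnN
  set S := ∑ i ∈ Finset.Icc 1 n, ω n i * B (U i) (U n) with hSdef
  set T := ∑ i ∈ Finset.Icc 1 n, norm1 (U i) with hTdef
  set Q := ∑ i ∈ Finset.Icc 1 n, (norm1 (U i)) ^ 2 with hQdef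
  have hk := hscheme n hn1 hnN (U n)
  -- inner product identity
  have hinner : 2 * ⟪U n - U (n - 1), U n⟫ =
      ‖U n‖ ^ 2 - ‖U (n - 1)‖ ^ 2 + ‖U n - U (n - 1)‖ ^ 2 := by
    have h1 : ‖U n - U (n - 1)‖ ^ 2
        = ‖U n‖ ^ 2 - 2 * ⟪U n, U (n - 1)⟫ + ‖U (n - 1)‖ ^ 2 :=
      norm_sub_sq_real (U n) (U (n - 1))
    have h2 : ⟪U n - U (n - 1), U n⟫ = ⟪U n, U n⟫ - ⟪U (n - 1), U n⟫ :=
      inner_sub_left _ _ _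
    have h3 : ⟪U n, U n⟫ = ‖U n‖ ^ 2 := real_inner_self_eq_norm_sq _
    have h4 : ⟪U (n - 1), U n⟫ = ⟪U n, U (n - 1)⟫ := real_inner_comm _ _
    linarith
  have hk' : ⟪U n - U (n - 1), U n⟫
      = Δt * (⟪f n, U n⟫ - A (U n) (U n) - Δt * S) := by
    field_simp at hk
    nlinarith [hk]
  have e1 : ‖U n‖ ^ 2 - ‖U (n - 1)‖ ^ 2 + ‖U n - U (n - 1)‖ ^ 2
      = 2 * Δt * (⟪f n, U n⟫ - A (U n) (U n) - Δt * S) := by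
    rw [← hinner, hk']; ring
  -- bound on S
  have hSb : |S| ≤ μ₀ * K₁ * T * norm1 (U n) := by
    calc |S| ≤ ∑ i ∈ Finset.Icc 1 n, |ω n i * B (U i) (U n)| :=
          Finset.abs_sum_le_sum_abs _ _
      _ ≤ ∑ i ∈ Finset.Icc 1 n, K₁ * (μ₀ * norm1 (U i) * norm1 (U n)) := by
          refine Finset.sum_le_sum fun i hi => ?_
          obtain ⟨hi1, hi2⟩ := Finset.mem_Icc.mp hi
          rw [abs_mul]
          exact mul_le_mul (hω n i hi1 hi2 hnN) (hB _ _) (abs_nonneg _) hK₁.le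
      _ = μ₀ * K₁ * T * norm1 (U n) := by
          rw [hTdef, Finset.mul_sum, Finset.sum_mul]
          exact Finset.sum_congr rfl fun i _ => by ring
  have hnegS : -S ≤ μ₀ * K₁ * T * norm1 (U n) := (neg_le_abs S).trans hSb
  -- Cauchy-Schwarz on the sum
  have hcs : T ^ 2 ≤ (n : ℝ) * Q := by
    have := sq_sum_le_card_mul_sum_sq (s := Finset.Icc 1 n) (f := fun i => norm1 (U i))
    simpa [hTdef, hQdef, Nat.card_Icc] using this
  -- Young's inequality (multiplied through by ν₀)
  have hyoung : 2 * ν₀ * Δt ^ 2 * (μ₀ * K₁ * T * norm1 (U n))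
      ≤ μ₀ ^ 2 * K₁ ^ 2 * Δt ^ 3 * T ^ 2 + ν₀ ^ 2 * Δt * (norm1 (U n)) ^ 2 := by
    nlinarith [mul_nonneg hΔt.le (sq_nonneg (μ₀ * K₁ * Δt * T - ν₀ * norm1 (U n)))]
  have hA := hcoer (U n)
  have hf : 2 * ⟪f n, U n⟫ ≤ ‖f n‖ ^ 2 + ‖U n‖ ^ 2 := by
    have h := real_inner_le_norm (f n) (U n)
    nlinarith [sq_nonneg (‖f n‖ - ‖U n‖)]
  -- multiplied inequalities
  have c1 : (0:ℝ) ≤ ν₀ * Δt := mul_nonneg hν₀.le hΔt.le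
  have m1 : ν₀ * Δt * (2 * ⟪f n, U n⟫) ≤ ν₀ * Δt * (‖f n‖ ^ 2 + ‖U n‖ ^ 2) :=
    mul_le_mul_of_nonneg_left hf c1
  have m2 : 2 * ν₀ * Δt * (ν₀ * (norm1 (U n)) ^ 2) ≤ 2 * ν₀ * Δt * (A (U n) (U n)) :=
    mul_le_mul_of_nonneg_left hA (by positivity)
  have m3 : 2 * ν₀ * Δt ^ 2 * (-S) ≤ 2 * ν₀ * Δt ^ 2 * (μ₀ * K₁ * T * norm1 (U n)) :=
    mul_le_mul_of_nonneg_left hnegS (by positivity)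
  have m4 : μ₀ ^ 2 * K₁ ^ 2 * Δt ^ 3 * T ^ 2 ≤ μ₀ ^ 2 * K₁ ^ 2 * Δt ^ 3 * ((n : ℝ) * Q) :=
    mul_le_mul_of_nonneg_left hcs (by positivity)
  have e1' : ν₀ * (‖U n‖ ^ 2 - ‖U (n - 1)‖ ^ 2 + ‖U n - U (n - 1)‖ ^ 2)
      = ν₀ * Δt * (2 * ⟪f n, U n⟫) - 2 * ν₀ * Δt * (A (U n) (U n))
        + 2 * ν₀ * Δt ^ 2 * (-S) := by rw [e1]; ring
  have main : (‖U n‖ ^ 2 + ‖U n - U (n - 1)‖ ^ 2 + ν₀ * Δt * (norm1 (U n)) ^ 2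
      - ‖U (n - 1)‖ ^ 2 - Δt * ‖f n‖ ^ 2 - Δt * ‖U n‖ ^ 2) * ν₀
      ≤ μ₀ ^ 2 * K₁ ^ 2 * (n : ℝ) * Δt ^ 3 * Q := by linarith [m1, m2, m3, m4, e1', hyoung]
  have hdiv : ‖U n‖ ^ 2 + ‖U n - U (n - 1)‖ ^ 2 + ν₀ * Δt * (norm1 (U n)) ^ 2
      - ‖U (n - 1)‖ ^ 2 - Δt * ‖f n‖ ^ 2 - Δt * ‖U n‖ ^ 2
      ≤ μ₀ ^ 2 * K₁ ^ 2 * (n : ℝ) * Δt ^ 3 * Q / ν₀ := (le_div_iff₀ hν₀).mpr main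
  have hrw : (μ₀ ^ 2 * K₁ ^ 2 * ((n : ℝ) * Δt) / ν₀) * Δt ^ 2 * Q
      = μ₀ ^ 2 * K₁ ^ 2 * (n : ℝ) * Δt ^ 3 * Q / ν₀ := by ring
  rw [hrw]
  linarith
end

section
/- Stability of the classic fully discrete finite element method (Theorem 3.1): There exists a constant C depending only on T, ν₀, μ₀ and K₁ such that the following holds. Suppose a sequence (U^n)_{n=0}^N in H and data f^1,…,f^N ∈ H satisfy, for every 1 ≤ n ≤ N and every v ∈ H, ((U^n − U^{n−1})/Δt, v) + A(U^n, v) + Δt Σ_{i=1}^n ω_{n,i} B(U^i, v) = (f^n, v). If Δt ≤ min{1/2, 7ν₀²/(8μ₀²K₁²T)}, then for every 1 ≤ n ≤ N: ‖U^n‖ + (Σ_{i=1}^n ‖U^i − U^{i−1}‖²)^{1/2} + (√ν₀/2)(Δt Σ_{i=1}^n ‖U^i‖₁²)^{1/2} ≤ C (‖U^0‖² + Δt Σ_{i=1}^n ‖f^i‖²)^{1/2}. -/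
open scoped BigOperators RealInnerProductSpace

lemma fem_tel (e : ℕ → ℝ) (m : ℕ) :
    ∑ n ∈ Finset.Icc 1 m, (e n - e (n - 1)) = e m - e 0 := by
  induction m with
  | zero => simp
  | succ p ih =>
      rw [Finset.sum_Icc_succ_top (by omega : 1 ≤ p + 1), ih]
      simp

lemma fem_geom (c : ℝ) (m : ℕ) :
    1 + c * ∑ i ∈ Finset.range m, (1 + c) ^ i = (1 + c) ^ m := by
  induction m with
  | zero => simp
  | succ p ih =>
      rw [Finset.sum_range_succ, pow_succ]
      ring_nf
      ring_nf at ih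
      nlinarith [ih]

lemma fem_gronwall (c : ℝ) (hc : 0 ≤ c) (M : ℕ) (ψ g : ℕ → ℝ)
    (hg0 : ∀ n, 0 ≤ g n) (hgm : ∀ i j, i ≤ j → g i ≤ g j)
    (h : ∀ m, m ≤ M → ψ m ≤ g m + c * ∑ n ∈ Finset.Icc 1 (m - 1), ψ n) :
    ∀ m, m ≤ M → ψ m ≤ (1 + c) ^ m * g m := by
  intro m
  induction m using Nat.strong_induction_on with
  | _ m ih =>
    intro hm
    have step : ∀ n ∈ Finset.Icc 1 (m - 1), ψ n ≤ (1 + c) ^ n * g m := by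
      intro n hn
      rw [Finset.mem_Icc] at hn
      have hnm : n < m := by omega
      calc ψ n ≤ (1 + c) ^ n * g n := ih n hnm (le_trans hnm.le hm)
        _ ≤ (1 + c) ^ n * g m := by
            have h1 := hgm n m hnm.le
            have hp : (0:ℝ) ≤ (1 + c) ^ n := by positivity
            nlinarith
    have h2 : ∑ n ∈ Finset.Icc 1 (m - 1), ψ n
        ≤ ∑ n ∈ Finset.Icc 1 (m - 1), (1 + c) ^ n * g m :=
      Finset.sum_le_sum step
    have h3 : ∑ n ∈ Finset.Icc 1 (m - 1), (1 + c) ^ n * g m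
        ≤ (∑ n ∈ Finset.range m, (1 + c) ^ n) * g m := by
      rw [← Finset.sum_mul]
      apply mul_le_mul_of_nonneg_right _ (hg0 m)
      apply Finset.sum_le_sum_of_subset_of_nonneg
      · intro x hx
        rw [Finset.mem_Icc] at hx
        rw [Finset.mem_range]
        omega
      · intro i _ _
        positivity
    have h4 := h m hm
    have h5 : ψ m ≤ g m + c * ((∑ n ∈ Finset.range m, (1 + c) ^ n) * g m) := by
      nlinarith [h2, h3]
    calc ψ m ≤ g m * (1 + c * ∑ n ∈ Finset.range m, (1 + c) ^ n) := by nlinarith [h5]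
      _ = (1 + c) ^ m * g m := by rw [fem_geom]; ring

set_option maxHeartbeats 2000000 in
lemma fem_combine (ν₀ Δt T lam : ℝ) (N : ℕ) (e d a q : ℕ → ℝ)
    (hν₀ : 0 < ν₀) (hΔt : 0 < Δt) (hlam : 0 ≤ lam)
    (he : ∀ k, 0 ≤ e k) (hd : ∀ k, 0 ≤ d k) (ha : ∀ k, 0 ≤ a k) (hq : ∀ k, 0 ≤ q k)
    (hNT : (N : ℝ) * Δt = T)
    (hhalf : Δt ≤ 1 / 2) (hlamc : Δt * lam ≤ 7 / 8)
    (key : ∀ k, 1 ≤ k → k ≤ N →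
      (e k - e (k - 1)) + (d k + Δt * (ν₀ * a k))
      ≤ Δt * q k + (Δt * e k + lam * (Δt ^ 2 * ν₀) * ∑ i ∈ Finset.Icc 1 k, a i)) :
    ∀ n, 1 ≤ n → n ≤ N →
      Real.sqrt (e n) + Real.sqrt (∑ i ∈ Finset.Icc 1 n, d i)
        + (Real.sqrt ν₀ / 2) * Real.sqrt (Δt * ∑ i ∈ Finset.Icc 1 n, a i)
      ≤ 4 * Real.exp ((2 + 8 * lam) * T)
          * Real.sqrt (e 0 + Δt * ∑ i ∈ Finset.Icc 1 n, q i) := by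
  intro n hn1 hnN
  set β : ℝ := lam * (Δt ^ 2 * ν₀) with hβ
  have hβ0 : 0 ≤ β := by positivity
  -- summed energy inequality
  have summed : ∀ m, 1 ≤ m → m ≤ N →
      e m + (∑ i ∈ Finset.Icc 1 m, d i) + ν₀ * Δt * (∑ i ∈ Finset.Icc 1 m, a i)
      ≤ (e 0 + Δt * ∑ i ∈ Finset.Icc 1 m, q i)
        + ∑ k ∈ Finset.Icc 1 m, (Δt * e k + β * ∑ i ∈ Finset.Icc 1 k, a i) := by
    intro m hm1 hmN
    have hsum : ∑ k ∈ Finset.Icc 1 m, ((e k - e (k - 1)) + (d k + Δt * (ν₀ * a k)))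
        ≤ ∑ k ∈ Finset.Icc 1 m, (Δt * q k + (Δt * e k + β * ∑ i ∈ Finset.Icc 1 k, a i)) := by
      apply Finset.sum_le_sum
      intro k hk
      rw [Finset.mem_Icc] at hk
      exact key k hk.1 (hk.2.trans hmN)
    have e1 : ∑ k ∈ Finset.Icc 1 m, ((e k - e (k - 1)) + (d k + Δt * (ν₀ * a k)))
        = (e m - e 0) + ((∑ i ∈ Finset.Icc 1 m, d i)
            + ν₀ * Δt * (∑ i ∈ Finset.Icc 1 m, a i)) := by
      rw [Finset.sum_add_distrib, fem_tel e m, Finset.sum_add_distrib,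
        ← Finset.mul_sum, ← Finset.mul_sum]
      ring
    have e2 : ∑ k ∈ Finset.Icc 1 m, (Δt * q k + (Δt * e k + β * ∑ i ∈ Finset.Icc 1 k, a i))
        = Δt * (∑ i ∈ Finset.Icc 1 m, q i)
          + ∑ k ∈ Finset.Icc 1 m, (Δt * e k + β * ∑ i ∈ Finset.Icc 1 k, a i) := by
      rw [Finset.sum_add_distrib, ← Finset.mul_sum]
    rw [e1, e2] at hsum
    linarith
  have hA0 : ∀ m, (0:ℝ) ≤ ∑ i ∈ Finset.Icc 1 m, a i :=
    fun m => Finset.sum_nonneg fun i _ => ha i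
  have hD0 : ∀ m, (0:ℝ) ≤ ∑ i ∈ Finset.Icc 1 m, d i :=
    fun m => Finset.sum_nonneg fun i _ => hd i
  have hQ0 : ∀ m, (0:ℝ) ≤ ∑ i ∈ Finset.Icc 1 m, q i :=
    fun m => Finset.sum_nonneg fun i _ => hq i
  -- Gronwall
  have gron : ∀ m, m ≤ N →
      (fun m => 1 / 2 * e m + (∑ i ∈ Finset.Icc 1 m, d i)
        + 1 / 8 * (ν₀ * Δt * ∑ i ∈ Finset.Icc 1 m, a i)) m
      ≤ (1 + Δt * (2 + 8 * lam)) ^ m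
        * (fun m => e 0 + Δt * ∑ i ∈ Finset.Icc 1 m, q i) m := by
    apply fem_gronwall (Δt * (2 + 8 * lam)) (by positivity) N
    · intro m
      have h1 := he 0
      have h2 := mul_nonneg hΔt.le (hQ0 m)
      linarith
    · intro i j hij
      have h1 : ∑ l ∈ Finset.Icc 1 i, q l ≤ ∑ l ∈ Finset.Icc 1 j, q l := by
        apply Finset.sum_le_sum_of_subset_of_nonneg
        · exact Finset.Icc_subset_Icc_right hij
        · intro l _ _
          exact hq l
      have h2 := mul_le_mul_of_nonneg_left h1 hΔt.le
      linarith
    · intro m hm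
      rcases Nat.eq_zero_or_pos m with hm0 | hm1
      · subst hm0
        simp
        linarith [he 0]
      · obtain ⟨p, rfl⟩ : ∃ p, m = p + 1 := ⟨m - 1, by omega⟩
        have hsplit : ∑ k ∈ Finset.Icc 1 (p + 1), (Δt * e k + β * ∑ i ∈ Finset.Icc 1 k, a i)
            = (∑ k ∈ Finset.Icc 1 p, (Δt * e k + β * ∑ i ∈ Finset.Icc 1 k, a i))
              + (Δt * e (p + 1) + β * ∑ i ∈ Finset.Icc 1 (p + 1), a i) :=
          Finset.sum_Icc_succ_top (by omega) _
        have hs := summed (p + 1) (by omega) hm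
        rw [hsplit] at hs
        -- absorb the top term
        have habs1 : Δt * e (p + 1) ≤ 1 / 2 * e (p + 1) := by
          nlinarith [mul_nonneg (by linarith : (0:ℝ) ≤ 1 / 2 - Δt) (he (p + 1))]
        have habs2 : β * ∑ i ∈ Finset.Icc 1 (p + 1), a i
            ≤ 7 / 8 * (ν₀ * Δt * ∑ i ∈ Finset.Icc 1 (p + 1), a i) := by
          have h1 : β ≤ 7 / 8 * (ν₀ * Δt) := by
            rw [hβ]
            have := mul_le_mul_of_nonneg_left hlamc (mul_nonneg hν₀.le hΔt.le)
            nlinarith [this]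
          have h2 := mul_le_mul_of_nonneg_right h1 (hA0 (p + 1))
          nlinarith [h2]
        -- bound the lower terms by c * ψ
        have hterm : ∀ k ∈ Finset.Icc 1 p,
            Δt * e k + β * ∑ i ∈ Finset.Icc 1 k, a i
            ≤ Δt * (2 + 8 * lam) * (1 / 2 * e k + (∑ i ∈ Finset.Icc 1 k, d i)
              + 1 / 8 * (ν₀ * Δt * ∑ i ∈ Finset.Icc 1 k, a i)) := by
          intro k _
          have hprod : (0:ℝ) ≤ ν₀ * Δt * ∑ i ∈ Finset.Icc 1 k, a i :=
            mul_nonneg (mul_nonneg hν₀.le hΔt.le) (hA0 k)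
          have hek : e k ≤ 2 * (1 / 2 * e k + (∑ i ∈ Finset.Icc 1 k, d i)
              + 1 / 8 * (ν₀ * Δt * ∑ i ∈ Finset.Icc 1 k, a i)) := by
            linarith [hD0 k]
          have c1 := mul_le_mul_of_nonneg_left hek hΔt.le
          have hak : 1 / 8 * (ν₀ * Δt * ∑ i ∈ Finset.Icc 1 k, a i)
              ≤ 1 / 2 * e k + (∑ i ∈ Finset.Icc 1 k, d i)
                + 1 / 8 * (ν₀ * Δt * ∑ i ∈ Finset.Icc 1 k, a i) := by
            linarith [he k, hD0 k]
          have c2 := mul_le_mul_of_nonneg_left hak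
            (by positivity : (0:ℝ) ≤ 8 * (Δt * lam))
          have h2 : β * ∑ i ∈ Finset.Icc 1 k, a i
              = 8 * (Δt * lam) * (1 / 8 * (ν₀ * Δt * ∑ i ∈ Finset.Icc 1 k, a i)) := by
            rw [hβ]; ring
          rw [h2]
          nlinarith [c1, c2]
        have hsum2 := Finset.sum_le_sum hterm
        rw [← Finset.mul_sum] at hsum2
        have hfin : (p + 1) - 1 = p := by omega
        rw [hfin]
        linarith
  have hψn := gron n hnN
  simp only at hψn
  -- exponential bound
  set c : ℝ := Δt * (2 + 8 * lam) with hc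
  set E : ℝ := Real.exp ((2 + 8 * lam) * T) with hE
  have hc0 : 0 ≤ c := by positivity
  have hpow : (1 + c) ^ n ≤ E := by
    have h1 : 1 + c ≤ Real.exp c := by
      have := Real.add_one_le_exp c
      linarith
    have h2 : (1 + c) ^ n ≤ Real.exp c ^ n := pow_le_pow_left₀ (by linarith) h1 n
    have h3 : Real.exp c ^ n = Real.exp ((n : ℝ) * c) := (Real.exp_nat_mul c n).symm
    have h4 : (n : ℝ) * c ≤ (2 + 8 * lam) * T := by
      have hn : (n : ℝ) ≤ (N : ℝ) := Nat.cast_le.mpr hnN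
      have hnt : (n : ℝ) * Δt ≤ T := by
        have := mul_le_mul_of_nonneg_right hn hΔt.le
        linarith [hNT]
      rw [hc]
      have := mul_le_mul_of_nonneg_right hnt (by linarith : (0:ℝ) ≤ 2 + 8 * lam)
      nlinarith [this]
    calc (1 + c) ^ n ≤ Real.exp ((n : ℝ) * c) := by rw [← h3]; exact h2
      _ ≤ E := by rw [hE]; exact Real.exp_le_exp.mpr h4
  have hE1 : 1 ≤ E := by
    rw [hE]
    have h0 : (0:ℝ) ≤ (2 + 8 * lam) * T := by
      have hT0 : (0:ℝ) ≤ T := by rw [← hNT]; positivity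
      have : (0:ℝ) ≤ 2 + 8 * lam := by linarith
      exact mul_nonneg this hT0
    calc (1:ℝ) = Real.exp 0 := Real.exp_zero.symm
      _ ≤ E := by rw [hE]; exact Real.exp_le_exp.mpr h0
  set G : ℝ := e 0 + Δt * ∑ i ∈ Finset.Icc 1 n, q i with hG
  have hG0 : 0 ≤ G := by
    rw [hG]
    have := he 0
    linarith [mul_nonneg hΔt.le (hQ0 n)]
  set Ψ : ℝ := 1 / 2 * e n + (∑ i ∈ Finset.Icc 1 n, d i)
      + 1 / 8 * (ν₀ * Δt * ∑ i ∈ Finset.Icc 1 n, a i) with hΨ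
  have hΨ0 : 0 ≤ Ψ := by
    rw [hΨ]
    have := he n; have := hD0 n
    linarith [mul_nonneg (mul_nonneg hν₀.le hΔt.le) (hA0 n)]
  have hψE : Ψ ≤ E * G := by
    calc Ψ ≤ (1 + c) ^ n * G := hψn
      _ ≤ E * G := mul_le_mul_of_nonneg_right hpow hG0
  -- final assembly
  have t1 : Real.sqrt (e n) ≤ 3 / 2 * Real.sqrt Ψ := by
    have h1 : e n ≤ (3 / 2) ^ 2 * Ψ := by
      rw [hΨ]
      have := hD0 n
      linarith [mul_nonneg (mul_nonneg hν₀.le hΔt.le) (hA0 n), he n]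
    calc Real.sqrt (e n) ≤ Real.sqrt ((3 / 2) ^ 2 * Ψ) := Real.sqrt_le_sqrt h1
      _ = 3 / 2 * Real.sqrt Ψ := by
          rw [Real.sqrt_mul (by positivity), Real.sqrt_sq (by norm_num)]
  have t2 : Real.sqrt (∑ i ∈ Finset.Icc 1 n, d i) ≤ Real.sqrt Ψ := by
    apply Real.sqrt_le_sqrt
    rw [hΨ]
    have := he n
    linarith [mul_nonneg (mul_nonneg hν₀.le hΔt.le) (hA0 n)]
  have t3 : (Real.sqrt ν₀ / 2) * Real.sqrt (Δt * ∑ i ∈ Finset.Icc 1 n, a i)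
      ≤ 3 / 2 * Real.sqrt Ψ := by
    have h1 : Real.sqrt ν₀ * Real.sqrt (Δt * ∑ i ∈ Finset.Icc 1 n, a i)
        = Real.sqrt (ν₀ * (Δt * ∑ i ∈ Finset.Icc 1 n, a i)) :=
      (Real.sqrt_mul hν₀.le _).symm
    have h2 : ν₀ * (Δt * ∑ i ∈ Finset.Icc 1 n, a i) ≤ 3 ^ 2 * Ψ := by
      rw [hΨ]
      have := he n; have := hD0 n
      have hx : ν₀ * (Δt * ∑ i ∈ Finset.Icc 1 n, a i)
          = ν₀ * Δt * ∑ i ∈ Finset.Icc 1 n, a i := by ring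
      rw [hx]
      linarith [mul_nonneg (mul_nonneg hν₀.le hΔt.le) (hA0 n)]
    have h3 : Real.sqrt (ν₀ * (Δt * ∑ i ∈ Finset.Icc 1 n, a i)) ≤ 3 * Real.sqrt Ψ := by
      calc Real.sqrt (ν₀ * (Δt * ∑ i ∈ Finset.Icc 1 n, a i))
          ≤ Real.sqrt (3 ^ 2 * Ψ) := Real.sqrt_le_sqrt h2
        _ = 3 * Real.sqrt Ψ := by
            rw [Real.sqrt_mul (by positivity), Real.sqrt_sq (by norm_num)]
    calc (Real.sqrt ν₀ / 2) * Real.sqrt (Δt * ∑ i ∈ Finset.Icc 1 n, a i)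
        = (Real.sqrt ν₀ * Real.sqrt (Δt * ∑ i ∈ Finset.Icc 1 n, a i)) / 2 := by ring
      _ = Real.sqrt (ν₀ * (Δt * ∑ i ∈ Finset.Icc 1 n, a i)) / 2 := by rw [h1]
      _ ≤ 3 * Real.sqrt Ψ / 2 := by linarith
      _ = 3 / 2 * Real.sqrt Ψ := by ring
  have t4 : Real.sqrt Ψ ≤ E * Real.sqrt G := by
    calc Real.sqrt Ψ ≤ Real.sqrt (E * G) := Real.sqrt_le_sqrt hψE
      _ = Real.sqrt E * Real.sqrt G := Real.sqrt_mul (by linarith) _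
      _ ≤ E * Real.sqrt G := by
          apply mul_le_mul_of_nonneg_right _ (Real.sqrt_nonneg _)
          calc Real.sqrt E ≤ Real.sqrt (E ^ 2) := Real.sqrt_le_sqrt (by nlinarith)
            _ = E := Real.sqrt_sq (by linarith)
  have hsq : 0 ≤ Real.sqrt Ψ := Real.sqrt_nonneg _
  calc Real.sqrt (e n) + Real.sqrt (∑ i ∈ Finset.Icc 1 n, d i)
        + (Real.sqrt ν₀ / 2) * Real.sqrt (Δt * ∑ i ∈ Finset.Icc 1 n, a i)
      ≤ 4 * Real.sqrt Ψ := by linarith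
    _ ≤ 4 * (E * Real.sqrt G) := by linarith
    _ = 4 * E * Real.sqrt G := by ring

set_option maxHeartbeats 2000000 in
/-- Stability of the classic fully discrete finite element method (Theorem 3.1). -/
theorem stability_classic_fem
    (T ν₀ μ₀ K₁ : ℝ) (hT : 0 < T) (hν₀ : 0 < ν₀) (hμ₀ : 0 < μ₀) (hK₁ : 0 < K₁) :
    ∃ C : ℝ, 0 < C ∧
      ∀ (H : Type) [NormedAddCommGroup H] [InnerProductSpace ℝ H]
        (norm1 : H → ℝ), (∀ x, 0 ≤ norm1 x) →
      ∀ A : H →ₗ[ℝ] H →ₗ[ℝ] ℝ, (∀ v, ν₀ * (norm1 v) ^ 2 ≤ A v v) →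
      ∀ Δt : ℝ, 0 < Δt → ∀ N : ℕ, 1 ≤ N → (N : ℝ) * Δt = T →
      ∀ ω : ℕ → ℕ → ℝ, (∀ n i, 1 ≤ i → i ≤ n → n ≤ N → |ω n i| ≤ K₁) →
      ∀ B : H → H → ℝ, (∀ u v, |B u v| ≤ μ₀ * norm1 u * norm1 v) →
      ∀ U f : ℕ → H,
        (∀ n, 1 ≤ n → n ≤ N → ∀ v : H,
          ⟪U n - U (n - 1), v⟫ / Δt + A (U n) v
            + Δt * ∑ i ∈ Finset.Icc 1 n, ω n i * B (U i) v = ⟪f n, v⟫) →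
        Δt ≤ min (1 / 2) (7 * ν₀ ^ 2 / (8 * μ₀ ^ 2 * K₁ ^ 2 * T)) →
        ∀ n, 1 ≤ n → n ≤ N →
          ‖U n‖ + Real.sqrt (∑ i ∈ Finset.Icc 1 n, ‖U i - U (i - 1)‖ ^ 2)
            + (Real.sqrt ν₀ / 2)
                * Real.sqrt (Δt * ∑ i ∈ Finset.Icc 1 n, (norm1 (U i)) ^ 2)
          ≤ C * Real.sqrt (‖U 0‖ ^ 2 + Δt * ∑ i ∈ Finset.Icc 1 n, ‖f i‖ ^ 2) := by
  set lam : ℝ := K₁ ^ 2 * μ₀ ^ 2 * T / ν₀ ^ 2 with hlamdef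
  have hlam0 : 0 < lam := by positivity
  refine ⟨4 * Real.exp ((2 + 8 * lam) * T), by positivity, ?_⟩
  intro H _ _ norm1 hnorm1 A hA Δt hΔt N hN hNΔt ω hω B hB U f hU hΔtc n hn1 hnN
  have hΔthalf : Δt ≤ 1 / 2 := le_trans hΔtc (min_le_left _ _)
  have hcond : Δt * (K₁ ^ 2 * μ₀ ^ 2 * T) ≤ 7 / 8 * ν₀ ^ 2 := by
    have h1 : Δt ≤ 7 * ν₀ ^ 2 / (8 * μ₀ ^ 2 * K₁ ^ 2 * T) := le_trans hΔtc (min_le_right _ _)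
    rw [le_div_iff₀ (by positivity)] at h1
    linarith
  have hlamc : Δt * lam ≤ 7 / 8 := by
    rw [hlamdef]
    rw [mul_div_assoc', div_le_iff₀ (by positivity)]
    linarith [hcond]
  have hlamid : lam * ν₀ ^ 2 = K₁ ^ 2 * μ₀ ^ 2 * T := by
    rw [hlamdef]
    field_simp
  -- per-step energy inequality
  have key : ∀ k, 1 ≤ k → k ≤ N →
      (‖U k‖ ^ 2 - ‖U (k - 1)‖ ^ 2) + (‖U k - U (k - 1)‖ ^ 2 + Δt * (ν₀ * (norm1 (U k)) ^ 2))
      ≤ Δt * ‖f k‖ ^ 2 + (Δt * ‖U k‖ ^ 2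
          + lam * (Δt ^ 2 * ν₀) * ∑ i ∈ Finset.Icc 1 k, (norm1 (U i)) ^ 2) := by
    intro k hk1 hkN
    have heq := hU k hk1 hkN (U k)
    have h2 := congrArg (fun x : ℝ => x * Δt) heq
    rw [add_mul, add_mul, div_mul_cancel₀ _ (ne_of_gt hΔt)] at h2
    -- h2 : ⟪U k - U (k-1), U k⟫ + A (U k) (U k) * Δt + (Δt * S) * Δt = ⟪f k, U k⟫ * Δt
    have hid : ‖U k - U (k - 1)‖ ^ 2
        = ‖U k‖ ^ 2 - 2 * ⟪U k, U (k - 1)⟫ + ‖U (k - 1)‖ ^ 2 := norm_sub_sq_real _ _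
    have hip : ⟪U k - U (k - 1), U k⟫
        = ⟪U k, U k⟫ - ⟪U (k - 1), U k⟫ := inner_sub_left _ _ _
    have hself : ⟪U k, U k⟫ = ‖U k‖ ^ 2 := real_inner_self_eq_norm_sq _
    have hcomm : ⟪U (k - 1), U k⟫ = ⟪U k, U (k - 1)⟫ := real_inner_comm _ _
    have h2P : 2 * ⟪U k - U (k - 1), U k⟫
        = ‖U k‖ ^ 2 - ‖U (k - 1)‖ ^ 2 + ‖U k - U (k - 1)‖ ^ 2 := by
      rw [hip, hself, hcomm]
      linarith [hid]
    -- force term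
    have hF : ⟪f k, U k⟫ ≤ ‖f k‖ * ‖U k‖ := real_inner_le_norm _ _
    have hFy : 2 * (‖f k‖ * ‖U k‖) ≤ ‖f k‖ ^ 2 + ‖U k‖ ^ 2 := by
      linarith [sq_nonneg (‖f k‖ - ‖U k‖)]
    have hF2 : 2 * ⟪f k, U k⟫ ≤ ‖f k‖ ^ 2 + ‖U k‖ ^ 2 := by linarith
    have hFc := mul_le_mul_of_nonneg_left hF2 hΔt.le
    -- coercivity
    have hAc := mul_le_mul_of_nonneg_left (hA (U k)) hΔt.le
    -- memory term
    have hSb : |∑ i ∈ Finset.Icc 1 k, ω k i * B (U i) (U k)|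
        ≤ K₁ * μ₀ * (∑ i ∈ Finset.Icc 1 k, norm1 (U i)) * norm1 (U k) := by
      calc |∑ i ∈ Finset.Icc 1 k, ω k i * B (U i) (U k)|
          ≤ ∑ i ∈ Finset.Icc 1 k, |ω k i * B (U i) (U k)| :=
            Finset.abs_sum_le_sum_abs _ _
        _ ≤ ∑ i ∈ Finset.Icc 1 k, K₁ * (μ₀ * norm1 (U i) * norm1 (U k)) := by
            apply Finset.sum_le_sum
            intro i hi
            rw [Finset.mem_Icc] at hi
            rw [abs_mul]
            exact mul_le_mul (hω k i hi.1 hi.2 hkN) (hB (U i) (U k)) (abs_nonneg _) hK₁.le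
        _ = ∑ i ∈ Finset.Icc 1 k, (K₁ * μ₀ * norm1 (U k)) * norm1 (U i) :=
            Finset.sum_congr rfl fun i _ => by ring
        _ = (K₁ * μ₀ * norm1 (U k)) * ∑ i ∈ Finset.Icc 1 k, norm1 (U i) :=
            (Finset.mul_sum _ _ _).symm
        _ = K₁ * μ₀ * (∑ i ∈ Finset.Icc 1 k, norm1 (U i)) * norm1 (U k) := by ring
    have hb0 : (0:ℝ) ≤ ∑ i ∈ Finset.Icc 1 k, norm1 (U i) :=
      Finset.sum_nonneg fun i _ => hnorm1 _
    have hAk0 : (0:ℝ) ≤ ∑ i ∈ Finset.Icc 1 k, (norm1 (U i)) ^ 2 :=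
      Finset.sum_nonneg fun i _ => sq_nonneg _
    have hcs : (∑ i ∈ Finset.Icc 1 k, norm1 (U i)) ^ 2
        ≤ (k : ℝ) * ∑ i ∈ Finset.Icc 1 k, (norm1 (U i)) ^ 2 := by
      have := sq_sum_le_card_mul_sum_sq (s := Finset.Icc 1 k)
        (f := fun i => norm1 (U i))
      simpa [Nat.card_Icc] using this
    have hkT : Δt * (k : ℝ) ≤ T := by
      have h1 := mul_le_mul_of_nonneg_left
        (show (k:ℝ) ≤ (N:ℝ) from Nat.cast_le.mpr hkN) hΔt.le
      linarith [hNΔt]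
    have m1 : -(∑ i ∈ Finset.Icc 1 k, ω k i * B (U i) (U k))
        ≤ K₁ * μ₀ * (∑ i ∈ Finset.Icc 1 k, norm1 (U i)) * norm1 (U k) :=
      le_trans (neg_le_abs _) hSb
    have m2 := mul_le_mul_of_nonneg_left m1 (by positivity : (0:ℝ) ≤ ν₀ * (2 * Δt ^ 2))
    have m3 : ν₀ * (2 * Δt ^ 2)
          * (K₁ * μ₀ * (∑ i ∈ Finset.Icc 1 k, norm1 (U i)) * norm1 (U k))
        ≤ ν₀ * (Δt * (ν₀ * (norm1 (U k)) ^ 2))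
          + Δt ^ 3 * (K₁ ^ 2 * μ₀ ^ 2 * (∑ i ∈ Finset.Icc 1 k, norm1 (U i)) ^ 2) := by
      nlinarith [mul_nonneg hΔt.le (sq_nonneg (ν₀ * norm1 (U k)
        - Δt * (K₁ * (μ₀ * ∑ i ∈ Finset.Icc 1 k, norm1 (U i)))))]
    have m4 : Δt ^ 3 * (K₁ ^ 2 * μ₀ ^ 2 * (∑ i ∈ Finset.Icc 1 k, norm1 (U i)) ^ 2)
        ≤ Δt ^ 3 * (K₁ ^ 2 * μ₀ ^ 2
            * ((k : ℝ) * ∑ i ∈ Finset.Icc 1 k, (norm1 (U i)) ^ 2)) := by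
      have := mul_le_mul_of_nonneg_left hcs
        (by positivity : (0:ℝ) ≤ Δt ^ 3 * (K₁ ^ 2 * μ₀ ^ 2))
      linarith [this]
    have m5 : Δt ^ 3 * (K₁ ^ 2 * μ₀ ^ 2
            * ((k : ℝ) * ∑ i ∈ Finset.Icc 1 k, (norm1 (U i)) ^ 2))
        ≤ Δt ^ 2 * (K₁ ^ 2 * μ₀ ^ 2
            * (T * ∑ i ∈ Finset.Icc 1 k, (norm1 (U i)) ^ 2)) := by
      have h1 := mul_le_mul_of_nonneg_right hkT
        (by positivity : (0:ℝ) ≤ K₁ ^ 2 * μ₀ ^ 2 * ∑ i ∈ Finset.Icc 1 k, (norm1 (U i)) ^ 2)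
      have h2 := mul_le_mul_of_nonneg_left h1 (sq_nonneg Δt)
      linarith [h2]
    have m6 : ν₀ * (lam * (Δt ^ 2 * ν₀) * ∑ i ∈ Finset.Icc 1 k, (norm1 (U i)) ^ 2)
        = Δt ^ 2 * (K₁ ^ 2 * μ₀ ^ 2
            * (T * ∑ i ∈ Finset.Icc 1 k, (norm1 (U i)) ^ 2)) := by
      linear_combination (Δt ^ 2 * ∑ i ∈ Finset.Icc 1 k, (norm1 (U i)) ^ 2) * hlamid
    have hmemν : ν₀ * (-(2 * (Δt ^ 2 * ∑ i ∈ Finset.Icc 1 k, ω k i * B (U i) (U k))))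
        ≤ ν₀ * (Δt * (ν₀ * (norm1 (U k)) ^ 2)
            + lam * (Δt ^ 2 * ν₀) * ∑ i ∈ Finset.Icc 1 k, (norm1 (U i)) ^ 2) := by
      linarith [m2, m3, m4, m5, m6]
    have hmem : -(2 * (Δt ^ 2 * ∑ i ∈ Finset.Icc 1 k, ω k i * B (U i) (U k)))
        ≤ Δt * (ν₀ * (norm1 (U k)) ^ 2)
          + lam * (Δt ^ 2 * ν₀) * ∑ i ∈ Finset.Icc 1 k, (norm1 (U i)) ^ 2 :=
      (mul_le_mul_iff_right₀ hν₀).mp hmemν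
    linarith [h2, h2P, hFc, hAc, hmem]
  -- apply the combined estimate
  have main := fem_combine ν₀ Δt T lam N
    (fun k => ‖U k‖ ^ 2) (fun k => ‖U k - U (k - 1)‖ ^ 2)
    (fun k => (norm1 (U k)) ^ 2) (fun k => ‖f k‖ ^ 2)
    hν₀ hΔt hlam0.le
    (fun k => sq_nonneg _) (fun k => sq_nonneg _) (fun k => sq_nonneg _)
    (fun k => sq_nonneg _)
    hNΔt hΔthalf hlamc key n hn1 hnN
  rwa [Real.sqrt_sq (norm_nonneg (U n))] at main
end

section
/- Per-step H¹ energy estimate: Suppose a sequence (U^n)_{n=0}^N in H and data f^1,…,f^N ∈ H satisfy, for every 1 ≤ n ≤ N and every v ∈ H, ((U^n − U^{n−1})/Δt, v) + A(U^n, v) + Δt Σ_{i=1}^n ω_{n,i} B(U^i, v) = (f^n, v). Then for every 1 ≤ n ≤ N: ν₀ ‖U^n‖₁² ≤ (1/2) Δt ‖f^n‖² + (t_n μ₀² K₁² / ν₀) Δt Σ_{i=1}^n ‖U^i‖₁² + ν₁ ‖U^{n−1}‖₁². -/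
open scoped BigOperators RealInnerProductSpace

set_option maxHeartbeats 1000000

/-- Per-step H¹ energy estimate (3.14). -/
theorem per_step_H1_energy_estimate
    {H : Type*} [NormedAddCommGroup H] [InnerProductSpace ℝ H]
    (norm1 : H → ℝ) (hnorm1 : ∀ x, 0 ≤ norm1 x)
    (A : H →ₗ[ℝ] H →ₗ[ℝ] ℝ) (ν₀ ν₁ : ℝ) (hν₀ : 0 < ν₀) (hν₁ : 0 < ν₁)
    (hsymm : ∀ u v, A u v = A v u)
    (hcoer : ∀ v, ν₀ * (norm1 v) ^ 2 ≤ A v v)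
    (hcont : ∀ u v, |A u v| ≤ ν₁ * norm1 u * norm1 v)
    (Δt : ℝ) (hΔt : 0 < Δt) (N : ℕ) (hN : 1 ≤ N)
    (ω : ℕ → ℕ → ℝ) (K₁ : ℝ) (hK₁ : 0 < K₁)
    (hω : ∀ n i, 1 ≤ i → i ≤ n → n ≤ N → |ω n i| ≤ K₁)
    (B : H → H → ℝ) (μ₀ : ℝ) (hμ₀ : 0 < μ₀)
    (hB : ∀ u v, |B u v| ≤ μ₀ * norm1 u * norm1 v)
    (U f : ℕ → H)
    (hscheme : ∀ n, 1 ≤ n → n ≤ N → ∀ v : H,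
      ⟪U n - U (n - 1), v⟫ / Δt + A (U n) v
        + Δt * ∑ i ∈ Finset.Icc 1 n, ω n i * B (U i) v = ⟪f n, v⟫) :
    ∀ n, 1 ≤ n → n ≤ N →
      ν₀ * (norm1 (U n)) ^ 2 ≤
        (1 / 2) * Δt * ‖f n‖ ^ 2
          + (((n : ℝ) * Δt) * μ₀ ^ 2 * K₁ ^ 2 / ν₀) * Δt
              * ∑ i ∈ Finset.Icc 1 n, (norm1 (U i)) ^ 2
          + ν₁ * (norm1 (U (n - 1))) ^ 2 := by
  intro n hn1 hnN
  -- abbreviations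
  set u : H := U n with hu
  set w : H := U (n - 1) with hw
  set d : H := u - w with hd
  set a : ℝ := norm1 u with ha
  set b : ℝ := norm1 w with hb
  set e : ℝ := norm1 d with he
  set S : ℝ := ∑ i ∈ Finset.Icc 1 n, norm1 (U i) with hSdef
  set Sq : ℝ := ∑ i ∈ Finset.Icc 1 n, (norm1 (U i)) ^ 2 with hSq
  set G : ℝ := ∑ i ∈ Finset.Icc 1 n, ω n i * B (U i) d with hGdef
  have hs := hscheme n hn1 hnN d
  rw [← hu, ← hw, ← hd, ← hGdef] at hs
  clear_value u w d a b e S Sq G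
  have hdd : ⟪d, d⟫ = ‖d‖ ^ 2 := real_inner_self_eq_norm_sq d
  rw [hdd] at hs
  -- cleared form of the scheme tested with v = d
  have hAud : Δt * A u d = Δt * ⟪f n, d⟫ - ‖d‖ ^ 2 - Δt ^ 2 * G := by
    have h1 : ‖d‖ ^ 2 / Δt * Δt = ‖d‖ ^ 2 := div_mul_cancel₀ _ (ne_of_gt hΔt)
    nlinarith [hs]
  -- polarization identity
  have hpol : A u u = A w w + 2 * A u d - A d d := by
    have h1 : A u d = A u u - A u w := by rw [hd, map_sub]
    have h2 : A d d = A u u - A u w - (A w u - A w w) := by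
      simp only [hd, map_sub, LinearMap.sub_apply]
      ring
    have h3 := hsymm u w
    linarith
  -- basic bounds
  have hQ : ν₀ * a ^ 2 ≤ A u u := by rw [ha]; exact hcoer u
  have hAww : A w w ≤ ν₁ * b ^ 2 := by
    rw [hb]
    have := (le_abs_self (A w w)).trans (hcont w w)
    nlinarith
  have hAdd : ν₀ * e ^ 2 ≤ A d d := by rw [he]; exact hcoer d
  have hX : ⟪f n, d⟫ ≤ ‖f n‖ * ‖d‖ := real_inner_le_norm _ _
  -- bound on the memory term
  have hGbound : |G| ≤ K₁ * μ₀ * e * S := by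
    have h1 : |G| ≤ ∑ i ∈ Finset.Icc 1 n, |ω n i * B (U i) d| := by
      rw [hGdef]; exact Finset.abs_sum_le_sum_abs _ _
    have h2 : ∀ i ∈ Finset.Icc 1 n,
        |ω n i * B (U i) d| ≤ K₁ * μ₀ * e * norm1 (U i) := by
      intro i hi
      rw [Finset.mem_Icc] at hi
      rw [he]
      rw [abs_mul]
      have hωi := hω n i hi.1 hi.2 hnN
      have hBi := hB (U i) d
      have h3 : |ω n i| * |B (U i) d| ≤ K₁ * (μ₀ * norm1 (U i) * norm1 d) := by
        apply mul_le_mul hωi hBi (abs_nonneg _) (le_of_lt hK₁)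
      nlinarith
    calc |G| ≤ ∑ i ∈ Finset.Icc 1 n, |ω n i * B (U i) d| := h1
      _ ≤ ∑ i ∈ Finset.Icc 1 n, K₁ * μ₀ * e * norm1 (U i) :=
          Finset.sum_le_sum h2
      _ = K₁ * μ₀ * e * S := by rw [hSdef, Finset.mul_sum]
  have hGb : -G ≤ K₁ * μ₀ * e * S := by
    have := abs_le.mp hGbound
    linarith [this.1]
  -- Cauchy–Schwarz for the sum
  have hCS : S ^ 2 ≤ (n : ℝ) * Sq := by
    rw [hSdef, hSq]
    have h1 := Finset.sum_mul_sq_le_sq_mul_sq (Finset.Icc 1 n)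
      (fun _ => (1 : ℝ)) (fun i => norm1 (U i))
    simp only [one_mul, one_pow] at h1
    have hcard : ∑ _i ∈ Finset.Icc 1 n, (1 : ℝ) = (n : ℝ) := by
      rw [Finset.sum_const, Nat.card_Icc]
      simp
    rw [hcard] at h1
    exact h1
  -- nonnegativity facts
  have hSnn : 0 ≤ S := by
    rw [hSdef]; exact Finset.sum_nonneg fun i _ => hnorm1 _
  have hSqnn : 0 ≤ Sq := by
    rw [hSq]; exact Finset.sum_nonneg fun i _ => sq_nonneg _
  have henn : 0 ≤ e := by rw [he]; exact hnorm1 d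
  have hxnn : 0 ≤ ‖d‖ := norm_nonneg d
  have hφnn : 0 ≤ ‖f n‖ := norm_nonneg _
  -- main (cleared) estimate, multiplied by ν₀ * Δt
  have M1 : ν₀ * Δt * (ν₀ * a ^ 2) ≤ ν₀ * Δt * A u u := by
    have := mul_le_mul_of_nonneg_left hQ (le_of_lt (mul_pos hν₀ hΔt))
    linarith
  have M4 : ν₀ * Δt * A w w ≤ ν₀ * Δt * (ν₁ * b ^ 2) := by
    have := mul_le_mul_of_nonneg_left hAww (le_of_lt (mul_pos hν₀ hΔt))
    linarith
  have M5 : ν₀ * Δt * (ν₀ * e ^ 2) ≤ ν₀ * Δt * A d d := by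
    have := mul_le_mul_of_nonneg_left hAdd (le_of_lt (mul_pos hν₀ hΔt))
    linarith
  have M6 : 2 * ν₀ * Δt * ⟪f n, d⟫ ≤ 2 * ν₀ * Δt * (‖f n‖ * ‖d‖) := by
    have h2 : (0:ℝ) ≤ 2 * ν₀ * Δt := by positivity
    have := mul_le_mul_of_nonneg_left hX h2
    linarith
  have M7 : 2 * ν₀ * Δt ^ 2 * (-G) ≤ 2 * ν₀ * Δt ^ 2 * (K₁ * μ₀ * e * S) := by
    have h2 : (0:ℝ) ≤ 2 * ν₀ * Δt ^ 2 := by positivity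
    have := mul_le_mul_of_nonneg_left hGb h2
    linarith
  have M8 : Δt ^ 3 * K₁ ^ 2 * μ₀ ^ 2 * S ^ 2 ≤ Δt ^ 3 * K₁ ^ 2 * μ₀ ^ 2 * ((n : ℝ) * Sq) := by
    have h2 : (0:ℝ) ≤ Δt ^ 3 * K₁ ^ 2 * μ₀ ^ 2 := by positivity
    have := mul_le_mul_of_nonneg_left hCS h2
    linarith
  have M9 : 0 ≤ Δt * (Δt * K₁ * μ₀ * S - ν₀ * e) ^ 2 := by positivity
  have M10 : 0 ≤ ν₀ * (Δt * ‖f n‖ - 2 * ‖d‖) ^ 2 := by positivity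
  have Hc : ν₀ * Δt * (ν₀ * a ^ 2) ≤
      ν₀ * Δt * ((1 / 2) * Δt * ‖f n‖ ^ 2 + ν₁ * b ^ 2)
        + Δt ^ 3 * K₁ ^ 2 * μ₀ ^ 2 * ((n : ℝ) * Sq) := by
    have E1 : ν₀ * Δt * A u u
        = ν₀ * Δt * A w w + 2 * ν₀ * (Δt * A u d) - ν₀ * Δt * A d d := by
      linear_combination (ν₀ * Δt) * hpol
    have E2 : 2 * ν₀ * (Δt * A u d)
        = 2 * ν₀ * Δt * ⟪f n, d⟫ - 2 * ν₀ * ‖d‖ ^ 2 - 2 * ν₀ * Δt ^ 2 * G := by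
      linear_combination 2 * ν₀ * hAud
    linarith [M1, M4, M5, M6, M7, M8, M9, M10, E1, E2]
  -- divide by ν₀ * Δt
  have hpos : (0:ℝ) < ν₀ * Δt := mul_pos hν₀ hΔt
  have Hd : ν₀ * a ^ 2 - ((1 / 2) * Δt * ‖f n‖ ^ 2 + ν₁ * b ^ 2) ≤
      Δt ^ 3 * K₁ ^ 2 * μ₀ ^ 2 * ((n : ℝ) * Sq) / (ν₀ * Δt) := by
    rw [le_div_iff₀ hpos]
    linarith [Hc]
  have heq : Δt ^ 3 * K₁ ^ 2 * μ₀ ^ 2 * ((n : ℝ) * Sq) / (ν₀ * Δt)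
      = (((n : ℝ) * Δt) * μ₀ ^ 2 * K₁ ^ 2 / ν₀) * Δt * Sq := by
    field_simp
  rw [heq] at Hd
  linarith
end

section
/- A priori L² error propagation estimate (core of Theorem 3.3): Assume the smallness condition 16σ²K₁²T < ν₀². Then there exist Δt₀ > 0 and C > 0, depending only on T, ν₀, σ, K₁, c₀ and c₁, such that the following holds whenever Δt ≤ Δt₀ and NΔt = T. Let δ ≥ 0 and let (θ^n)_{n=0}^N be a sequence in H with θ^0 = 0 such that for every 1 ≤ n ≤ N the functional v ↦ ((θ^n − θ^{n−1})/Δt, v) + A(θ^n, v) is bounded in absolute value by [c₀Δt + σK₁Δt Σ_{i=1}^n ‖θ^i‖₁ + c₁K₁Δt Σ_{i=1}^n (δ + ‖θ^i‖)] ‖v‖₁ + c₀(Δt + δ) ‖v‖ for every v ∈ H. Then for every 1 ≤ n ≤ N: ‖θ^n‖ + ‖θ^n − θ^{n−1}‖ + √(ν₀Δt) ‖θ^n‖₁ ≤ C (δ + Δt). -/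
open scoped BigOperators RealInnerProductSpace

private lemma icc_shift (g : ℕ → ℝ) (m : ℕ) :
    ∑ i ∈ Finset.Icc 1 m, g i = ∑ k ∈ Finset.range m, g (k+1) := by
  induction m with
  | zero => simp
  | succ k ih => rw [Finset.sum_Icc_succ_top (by omega), ih, Finset.sum_range_succ]

private lemma gronwall (v : ℕ → ℝ) (G ε : ℝ) (hG : 0 ≤ G) (hε : 0 ≤ ε) (hε2 : ε ≤ 1/2)
    (hv : ∀ n, 0 ≤ v n) (N : ℕ)
    (h : ∀ m, 1 ≤ m → m ≤ N → v m ≤ G + ε * ∑ n ∈ Finset.Icc 1 m, v n) :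
    ∀ m, 1 ≤ m → m ≤ N → v m ≤ 2*G*(1+2*ε)^m := by
  intro m
  induction m using Nat.strong_induction_on with
  | _ m ih =>
    intro hm1 hmN
    obtain ⟨k, rfl⟩ : ∃ k, m = k + 1 := ⟨m - 1, by omega⟩
    have hq1 : (1:ℝ) ≤ 1 + 2*ε := by linarith
    have key := h (k+1) (by omega) hmN
    rw [Finset.sum_Icc_succ_top (by omega)] at key
    have hsum : ∑ n ∈ Finset.Icc 1 k, v n ≤ ∑ n ∈ Finset.Icc 1 k, 2*G*(1+2*ε)^n := by
      apply Finset.sum_le_sum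
      intro i hi
      simp only [Finset.mem_Icc] at hi
      exact ih i (by omega) hi.1 (by omega)
    have h1 : v (k+1) ≤ 2*G + 2*ε * ∑ n ∈ Finset.Icc 1 k, v n := by
      nlinarith [hv (k+1)]
    have hgeom : (2*ε) * ∑ n ∈ Finset.range k, (1+2*ε)^n = (1+2*ε)^k - 1 := by
      have := geom_sum_mul (1+2*ε) k
      linarith [this]
    have h2 : ∑ n ∈ Finset.Icc 1 k, (1+2*ε)^n = (1+2*ε) * ∑ n ∈ Finset.range k, (1+2*ε)^n := by
      rw [icc_shift, Finset.mul_sum]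
      exact Finset.sum_congr rfl (fun i _ => by ring)
    have h3 : 2*G + 2*ε * ∑ n ∈ Finset.Icc 1 k, 2*G*(1+2*ε)^n ≤ 2*G*(1+2*ε)^(k+1) := by
      have hfac : ∑ n ∈ Finset.Icc 1 k, 2*G*(1+2*ε)^n = 2*G * ∑ n ∈ Finset.Icc 1 k, (1+2*ε)^n := by
        rw [Finset.mul_sum]
      rw [hfac, h2]
      have hpow : (1:ℝ) ≤ (1+2*ε)^k := one_le_pow₀ hq1
      have : 2*ε*((1+2*ε)*∑ n ∈ Finset.range k, (1+2*ε)^n) = (1+2*ε)*((1+2*ε)^k - 1) := by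
        rw [← hgeom]; ring
      have h6 : 2*ε*(2*G*((1+2*ε)*∑ n ∈ Finset.range k, (1+2*ε)^n)) =
          2*G*((1+2*ε)*((1+2*ε)^k - 1)) := by linear_combination 2*G*this
      rw [h6]
      rw [pow_succ]
      nlinarith [mul_nonneg hG hε]
    have h4 : 2*ε * ∑ n ∈ Finset.Icc 1 k, v n ≤ 2*ε * ∑ n ∈ Finset.Icc 1 k, 2*G*(1+2*ε)^n :=
      mul_le_mul_of_nonneg_left hsum (by linarith)
    linarith

set_option maxHeartbeats 1000000 in
private lemma step_alg (ν₀ σ K₁ c₀ c₁ δ Δt T : ℝ) (k : ℕ)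
    (a aprev b e Ek Ak S P : ℝ)
    (hν₀ : 0 < ν₀) (hσ : 0 ≤ σ) (hK₁ : 0 ≤ K₁) (hc₀ : 0 ≤ c₀) (hc₁ : 0 ≤ c₁)
    (hδ : 0 ≤ δ) (hΔt : 0 < Δt) (hkT : (k:ℝ)*Δt ≤ T)
    (hS : 0 ≤ S) (hP : 0 ≤ P)
    (hCS1 : Ek^2 ≤ k * S) (hCS2 : Ak^2 ≤ k * P)
    (key0 : a^2 - aprev^2 + b^2 + 2*Δt*(ν₀*e^2) ≤
       2*Δt*((c₀*Δt + σ*K₁*Δt*Ek + c₁*K₁*Δt*((k:ℝ)*δ + Ak))*e + c₀*(Δt+δ)*a)) :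
    ν₀*(a^2 - aprev^2 + b^2) + ν₀^2*Δt*e^2 ≤
      Δt*((3*c₀^2*Δt^2 + 6*c₁^2*K₁^2*T^2*δ^2 + ν₀*c₀^2*(Δt+δ)^2)
          + 3*σ^2*K₁^2*T*(Δt*S) + 6*c₁^2*K₁^2*T*(Δt*P) + ν₀*a^2) := by
  set B := c₀*Δt + σ*K₁*Δt*Ek + c₁*K₁*Δt*((k:ℝ)*δ + Ak) with hB
  have hk0 : 0 ≤ (k:ℝ)*Δt := by positivity
  have hkey : ν₀*(a^2 - aprev^2 + b^2) + 2*Δt*ν₀^2*e^2 ≤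
      Δt*(2*ν₀*B*e) + Δt*(2*ν₀*(c₀*(Δt+δ)*a)) := by
    have := mul_le_mul_of_nonneg_left key0 hν₀.le
    linarith [this]
  have hY1 : Δt*(2*ν₀*B*e) ≤ Δt*(ν₀^2*e^2) + Δt*B^2 := by
    have h : 2*ν₀*B*e ≤ ν₀^2*e^2 + B^2 := by nlinarith [sq_nonneg (ν₀*e - B)]
    linarith [mul_le_mul_of_nonneg_left h hΔt.le]
  have hY2 : Δt*(2*ν₀*(c₀*(Δt+δ)*a)) ≤ Δt*(ν₀*c₀^2*(Δt+δ)^2) + Δt*(ν₀*a^2) := by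
    have h : 2*ν₀*(c₀*(Δt+δ)*a) ≤ ν₀*c₀^2*(Δt+δ)^2 + ν₀*a^2 := by
      nlinarith [mul_nonneg hν₀.le (sq_nonneg (c₀*(Δt+δ) - a))]
    linarith [mul_le_mul_of_nonneg_left h hΔt.le]
  have hBsq : Δt*B^2 ≤ Δt*(3*c₀^2*Δt^2) + 3*σ^2*K₁^2*(Δt^3*Ek^2)
      + 3*c₁^2*K₁^2*(Δt^3*((k:ℝ)*δ + Ak)^2) := by
    have h : B^2 ≤ 3*(c₀*Δt)^2 + 3*(σ*K₁*Δt*Ek)^2 + 3*(c₁*K₁*Δt*((k:ℝ)*δ + Ak))^2 := by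
      rw [hB]
      nlinarith [sq_nonneg (c₀*Δt - σ*K₁*Δt*Ek),
        sq_nonneg (σ*K₁*Δt*Ek - c₁*K₁*Δt*((k:ℝ)*δ + Ak)),
        sq_nonneg (c₀*Δt - c₁*K₁*Δt*((k:ℝ)*δ + Ak))]
    linarith [mul_le_mul_of_nonneg_left h hΔt.le]
  have e4 : Δt^3*Ek^2 ≤ T*(Δt^2*S) := by
    have e1 : Δt^3*Ek^2 ≤ Δt^3*((k:ℝ)*S) := mul_le_mul_of_nonneg_left hCS1 (by positivity)
    have e3 : ((k:ℝ)*Δt)*(Δt^2*S) ≤ T*(Δt^2*S) :=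
      mul_le_mul_of_nonneg_right hkT (by positivity)
    linarith [e1, e3]
  have hT1 : 3*σ^2*K₁^2*(Δt^3*Ek^2) ≤ Δt*(3*σ^2*K₁^2*T*(Δt*S)) := by
    linarith [mul_le_mul_of_nonneg_left e4 (show (0:ℝ) ≤ 3*σ^2*K₁^2 by positivity)]
  have hkT2 : ((k:ℝ)*Δt)^2 ≤ T^2 := by nlinarith [hkT, hk0]
  have f4 : Δt^3*(((k:ℝ)*δ + Ak)^2) ≤ 2*T^2*δ^2*Δt + 2*T*Δt*(Δt*P) := by
    have f0 : ((k:ℝ)*δ + Ak)^2 ≤ 2*(k:ℝ)^2*δ^2 + 2*((k:ℝ)*P) := by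
      nlinarith [sq_nonneg ((k:ℝ)*δ - Ak), hCS2]
    have f1 : Δt^3*(((k:ℝ)*δ + Ak)^2) ≤ Δt^3*(2*(k:ℝ)^2*δ^2 + 2*((k:ℝ)*P)) :=
      mul_le_mul_of_nonneg_left f0 (by positivity)
    have f2 : 2*((k:ℝ)*Δt)^2*(δ^2*Δt) ≤ 2*T^2*(δ^2*Δt) := by
      linarith [mul_le_mul_of_nonneg_right hkT2 (show (0:ℝ) ≤ δ^2*Δt by positivity)]
    have f3 : 2*((k:ℝ)*Δt)*(Δt^2*P) ≤ 2*T*(Δt^2*P) := by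
      linarith [mul_le_mul_of_nonneg_right hkT (show (0:ℝ) ≤ Δt^2*P by positivity)]
    linarith [f1, f2, f3]
  have hT2 : 3*c₁^2*K₁^2*(Δt^3*((k:ℝ)*δ + Ak)^2) ≤
      Δt*(6*c₁^2*K₁^2*T^2*δ^2) + Δt*(6*c₁^2*K₁^2*T*(Δt*P)) := by
    linarith [mul_le_mul_of_nonneg_left f4 (show (0:ℝ) ≤ 3*c₁^2*K₁^2 by positivity)]
  linarith [hkey, hY1, hY2, hBsq, hT1, hT2]

set_option maxHeartbeats 1000000 in
/-- A priori L² error propagation estimate (core of Theorem 3.3). -/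
theorem L2_error_propagation
    (T ν₀ σ K₁ c₀ c₁ : ℝ) (hT : 0 < T) (hν₀ : 0 < ν₀) (hσ : 0 < σ) (hK₁ : 0 < K₁)
    (hc₀ : 0 ≤ c₀) (hc₁ : 0 ≤ c₁)
    (hsmall : 16 * σ ^ 2 * K₁ ^ 2 * T < ν₀ ^ 2) :
    ∃ Δt₀ C : ℝ, 0 < Δt₀ ∧ 0 < C ∧
      ∀ (H : Type) [NormedAddCommGroup H] [InnerProductSpace ℝ H]
        (norm1 : H → ℝ), (∀ x, 0 ≤ norm1 x) →
      ∀ A : H →ₗ[ℝ] H →ₗ[ℝ] ℝ, (∀ v, ν₀ * (norm1 v) ^ 2 ≤ A v v) →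
      ∀ Δt : ℝ, 0 < Δt → Δt ≤ Δt₀ → ∀ N : ℕ, 1 ≤ N → (N : ℝ) * Δt = T →
      ∀ δ : ℝ, 0 ≤ δ →
      ∀ θ : ℕ → H, θ 0 = 0 →
        (∀ n, 1 ≤ n → n ≤ N → ∀ v : H,
          |⟪θ n - θ (n - 1), v⟫ / Δt + A (θ n) v| ≤
            (c₀ * Δt + σ * K₁ * Δt * ∑ i ∈ Finset.Icc 1 n, norm1 (θ i)
                + c₁ * K₁ * Δt * ∑ i ∈ Finset.Icc 1 n, (δ + ‖θ i‖)) * norm1 v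
              + c₀ * (Δt + δ) * ‖v‖) →
        ∀ n, 1 ≤ n → n ≤ N →
          ‖θ n‖ + ‖θ n - θ (n - 1)‖ + Real.sqrt (ν₀ * Δt) * norm1 (θ n) ≤
            C * (δ + Δt) := by
  set L := 3*σ^2*K₁^2*T/ν₀^2 + 1 + 6*c₁^2*K₁^2*T^2/ν₀ with hLdef
  have hL1 : (1:ℝ) ≤ L := by
    have h1 : 0 ≤ 3*σ^2*K₁^2*T/ν₀^2 := by positivity
    have h2 : 0 ≤ 6*c₁^2*K₁^2*T^2/ν₀ := by positivity
    rw [hLdef]; linarith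
  have hL0 : 0 < L := lt_of_lt_of_le one_pos hL1
  set M := 3*c₀^2 + 6*c₁^2*K₁^2*T^2 + ν₀*c₀^2 + 1 with hMdef
  have hM0 : 0 < M := by rw [hMdef]; positivity
  set Csq := 2*T*M*Real.exp (2*L*T)/ν₀ with hCsqdef
  have hCsq0 : 0 < Csq := by rw [hCsqdef]; positivity
  have hC0 : 0 < 3*Real.sqrt Csq := by
    have := Real.sqrt_pos.mpr hCsq0
    linarith
  have hdt00 : 0 < 1/(2*L) := by positivity
  refine ⟨1/(2*L), 3*Real.sqrt Csq, hdt00, hC0, ?_⟩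
  intro H _ _ norm1 hnorm1 A hcoer Δt hΔt hΔt0 N hN hNT δ hδ θ hθ0 hbound n hn1 hnN
  have hδΔ : 0 ≤ δ + Δt := by linarith
  -- inner product identity
  have hid : ∀ a b : H, 2*⟪a - b, a⟫ = ‖a‖^2 - ‖b‖^2 + ‖a - b‖^2 := by
    intro a b
    have h1 : ‖a - b‖^2 = ‖a‖^2 - 2*⟪a,b⟫ + ‖b‖^2 := norm_sub_sq_real a b
    have h2 : ⟪a - b, a⟫ = ⟪a,a⟫ - ⟪b,a⟫ := inner_sub_left a b a
    have h3 : ⟪a,a⟫ = ‖a‖^2 := real_inner_self_eq_norm_sq a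
    have h4 : ⟪a,b⟫ = ⟪b,a⟫ := real_inner_comm b a
    linarith
  set D₂ := 3*c₀^2*Δt^2 + 6*c₁^2*K₁^2*T^2*δ^2 + ν₀*c₀^2*(Δt+δ)^2 with hD2def
  have hD20 : 0 ≤ D₂ := by rw [hD2def]; positivity
  set S : ℕ → ℝ := fun m => ∑ i ∈ Finset.Icc 1 m, (norm1 (θ i))^2 with hSdef
  set P : ℕ → ℝ := fun m => ∑ i ∈ Finset.Icc 1 m, ‖θ i‖^2 with hPdef
  set Rq : ℕ → ℝ := fun m => ∑ i ∈ Finset.Icc 1 m, ‖θ i - θ (i-1)‖^2 with hRqdef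
  set w : ℕ → ℝ := fun m => ν₀*‖θ m‖^2 + ν₀*Rq m + ν₀^2*Δt*S m with hwdef
  have hS0 : ∀ m, 0 ≤ S m := by
    intro m; simp only [hSdef]; exact Finset.sum_nonneg (fun i _ => sq_nonneg _)
  have hP0 : ∀ m, 0 ≤ P m := by
    intro m; simp only [hPdef]; exact Finset.sum_nonneg (fun i _ => sq_nonneg _)
  have hRq0 : ∀ m, 0 ≤ Rq m := by
    intro m; simp only [hRqdef]; exact Finset.sum_nonneg (fun i _ => sq_nonneg _)
  have hw0 : ∀ m, 0 ≤ w m := by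
    intro m; simp only [hwdef]
    have h1 := hS0 m; have h2 := hRq0 m
    have h3 : (0:ℝ) ≤ ν₀^2*Δt := by positivity
    have h4 : (0:ℝ) ≤ ν₀*‖θ m‖^2 := by positivity
    linarith [mul_nonneg hν₀.le h2, mul_nonneg h3 h1, mul_nonneg hν₀.le (sq_nonneg ‖θ m‖)]
  have hxw : ∀ m, ν₀*‖θ m‖^2 ≤ w m := by
    intro m; simp only [hwdef]
    have h3 : (0:ℝ) ≤ ν₀^2*Δt := by positivity
    linarith [mul_nonneg hν₀.le (hRq0 m), mul_nonneg h3 (hS0 m)]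
  have hSw : ∀ m, ν₀^2*Δt*S m ≤ w m := by
    intro m; simp only [hwdef]
    linarith [mul_nonneg hν₀.le (hRq0 m), mul_nonneg hν₀.le (sq_nonneg ‖θ m‖)]
  have hRw : ∀ m, ν₀*Rq m ≤ w m := by
    intro m; simp only [hwdef]
    have h3 : (0:ℝ) ≤ ν₀^2*Δt := by positivity
    linarith [mul_nonneg hν₀.le (sq_nonneg ‖θ m‖), mul_nonneg h3 (hS0 m)]
  -- the one-step inequality
  have hstep : ∀ k, 1 ≤ k → k ≤ N →
      ν₀*(‖θ k‖^2 - ‖θ (k-1)‖^2 + ‖θ k - θ (k-1)‖^2) + ν₀^2*Δt*(norm1 (θ k))^2 ≤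
      Δt*((3*c₀^2*Δt^2 + 6*c₁^2*K₁^2*T^2*δ^2 + ν₀*c₀^2*(Δt+δ)^2)
          + 3*σ^2*K₁^2*T*(Δt*S k) + 6*c₁^2*K₁^2*T*(Δt*P k) + ν₀*‖θ k‖^2) := by
    intro k hk1 hkN
    have hkT : (k:ℝ)*Δt ≤ T := by
      rw [← hNT]
      exact mul_le_mul_of_nonneg_right (Nat.cast_le.mpr hkN) hΔt.le
    have h1 := hbound k hk1 hkN (θ k)
    have hsplit : ∑ i ∈ Finset.Icc 1 k, (δ + ‖θ i‖) =
        (k:ℝ)*δ + ∑ i ∈ Finset.Icc 1 k, ‖θ i‖ := by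
      rw [Finset.sum_add_distrib, Finset.sum_const, Nat.card_Icc, nsmul_eq_mul]
      simp
    rw [hsplit] at h1
    have habs := (le_abs_self _).trans h1
    have hco := hcoer (θ k)
    have hid2 := hid (θ k) (θ (k-1))
    have h2 : ⟪θ k - θ (k-1), θ k⟫ / Δt ≤
        ((c₀ * Δt + σ * K₁ * Δt * ∑ i ∈ Finset.Icc 1 k, norm1 (θ i)
            + c₁ * K₁ * Δt * ((k:ℝ)*δ + ∑ i ∈ Finset.Icc 1 k, ‖θ i‖)) * norm1 (θ k)
          + c₀ * (Δt + δ) * ‖θ k‖) - ν₀*(norm1 (θ k))^2 := by linarith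
    have h3 := (div_le_iff₀ hΔt).mp h2
    have hCS1 : (∑ i ∈ Finset.Icc 1 k, norm1 (θ i))^2 ≤ k * S k := by
      simp only [hSdef]
      have := sq_sum_le_card_mul_sum_sq (s := Finset.Icc 1 k) (f := fun i => norm1 (θ i))
      simpa using this
    have hCS2 : (∑ i ∈ Finset.Icc 1 k, ‖θ i‖)^2 ≤ k * P k := by
      simp only [hPdef]
      have := sq_sum_le_card_mul_sum_sq (s := Finset.Icc 1 k) (f := fun i => ‖θ i‖)
      simpa using this
    have key0 : ‖θ k‖^2 - ‖θ (k-1)‖^2 + ‖θ k - θ (k-1)‖^2 + 2*Δt*(ν₀*(norm1 (θ k))^2) ≤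
        2*Δt*((c₀*Δt + σ*K₁*Δt*(∑ i ∈ Finset.Icc 1 k, norm1 (θ i))
            + c₁*K₁*Δt*((k:ℝ)*δ + ∑ i ∈ Finset.Icc 1 k, ‖θ i‖))*norm1 (θ k)
          + c₀*(Δt+δ)*‖θ k‖) := by linarith [hid2, h3]
    exact step_alg ν₀ σ K₁ c₀ c₁ δ Δt T k (‖θ k‖) (‖θ (k-1)‖) (‖θ k - θ (k-1)‖)
      (norm1 (θ k)) (∑ i ∈ Finset.Icc 1 k, norm1 (θ i)) (∑ i ∈ Finset.Icc 1 k, ‖θ i‖)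
      (S k) (P k) hν₀ hσ.le hK₁.le hc₀ hc₁ hδ hΔt hkT (hS0 k) (hP0 k) hCS1 hCS2 key0
  -- summed inequality
  have hsum : ∀ m, 1 ≤ m → m ≤ N →
      w m ≤ T*D₂ + (L*Δt) * ∑ k ∈ Finset.Icc 1 m, w k := by
    intro m hm1 hmN
    have hmT : (m:ℝ)*Δt ≤ T := by
      rw [← hNT]
      exact mul_le_mul_of_nonneg_right (Nat.cast_le.mpr hmN) hΔt.le
    set W := ∑ k ∈ Finset.Icc 1 m, w k with hWdef
    have hW0 : 0 ≤ W := Finset.sum_nonneg (fun i _ => hw0 i)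
    have hsumstep := Finset.sum_le_sum (f := fun k =>
        ν₀*(‖θ k‖^2 - ‖θ (k-1)‖^2 + ‖θ k - θ (k-1)‖^2) + ν₀^2*Δt*(norm1 (θ k))^2)
      (g := fun k => Δt*((3*c₀^2*Δt^2 + 6*c₁^2*K₁^2*T^2*δ^2 + ν₀*c₀^2*(Δt+δ)^2)
          + 3*σ^2*K₁^2*T*(Δt*S k) + 6*c₁^2*K₁^2*T*(Δt*P k) + ν₀*‖θ k‖^2))
      (s := Finset.Icc 1 m)
      (fun k hk => by
        simp only [Finset.mem_Icc] at hk
        exact hstep k hk.1 (hk.2.trans hmN))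
    -- telescoping of the left side
    have hLHS : ∑ k ∈ Finset.Icc 1 m,
        (ν₀*(‖θ k‖^2 - ‖θ (k-1)‖^2 + ‖θ k - θ (k-1)‖^2) + ν₀^2*Δt*(norm1 (θ k))^2)
        = w m := by
      have e1 : ∀ k : ℕ, ν₀*(‖θ k‖^2 - ‖θ (k-1)‖^2 + ‖θ k - θ (k-1)‖^2)
          + ν₀^2*Δt*(norm1 (θ k))^2
          = (ν₀*‖θ k‖^2 - ν₀*‖θ (k-1)‖^2)
            + (ν₀*‖θ k - θ (k-1)‖^2 + ν₀^2*Δt*(norm1 (θ k))^2) := fun k => by ring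
      rw [Finset.sum_congr rfl (fun k _ => e1 k), Finset.sum_add_distrib]
      have e2 : ∑ k ∈ Finset.Icc 1 m, (ν₀*‖θ k‖^2 - ν₀*‖θ (k-1)‖^2)
          = ν₀*‖θ m‖^2 - ν₀*‖θ 0‖^2 := by
        rw [icc_shift]
        simp only [Nat.add_sub_cancel]
        exact Finset.sum_range_sub (fun j => ν₀*‖θ j‖^2) m
      have e3 : ∑ k ∈ Finset.Icc 1 m, (ν₀*‖θ k - θ (k-1)‖^2 + ν₀^2*Δt*(norm1 (θ k))^2)
          = ν₀*Rq m + ν₀^2*Δt*S m := by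
        rw [Finset.sum_add_distrib]
        simp only [hRqdef, hSdef, Finset.mul_sum]
      rw [e2, e3, hθ0]
      simp only [hwdef, norm_zero]
      ring
    rw [hLHS] at hsumstep
    -- bound the right side, scaled by ν₀^2
    have hperk : ∀ k ∈ Finset.Icc 1 m,
        ν₀^2 * (Δt*((3*c₀^2*Δt^2 + 6*c₁^2*K₁^2*T^2*δ^2 + ν₀*c₀^2*(Δt+δ)^2)
          + 3*σ^2*K₁^2*T*(Δt*S k) + 6*c₁^2*K₁^2*T*(Δt*P k) + ν₀*‖θ k‖^2))
        ≤ ν₀^2*Δt*D₂ + Δt*(3*σ^2*K₁^2*T)*w k + Δt*Δt*(6*c₁^2*K₁^2*T*ν₀)*W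
          + Δt*ν₀^2*w k := by
      intro k hk
      simp only [Finset.mem_Icc] at hk
      have hSk := hSw k
      have hxk := hxw k
      have hPk : ν₀*(P k) ≤ W := by
        have h1 : ν₀*(P k) = ∑ i ∈ Finset.Icc 1 k, ν₀*‖θ i‖^2 := by
          simp only [hPdef, Finset.mul_sum]
        have h2 : ∑ i ∈ Finset.Icc 1 k, ν₀*‖θ i‖^2 ≤ ∑ i ∈ Finset.Icc 1 k, w i :=
          Finset.sum_le_sum (fun i _ => hxw i)
        have h3 : ∑ i ∈ Finset.Icc 1 k, w i ≤ W := by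
          rw [hWdef]
          exact Finset.sum_le_sum_of_subset_of_nonneg
            (Finset.Icc_subset_Icc_right hk.2) (fun i _ _ => hw0 i)
        linarith
      have m1 : Δt*(3*σ^2*K₁^2*T)*(ν₀^2*Δt*S k) ≤ Δt*(3*σ^2*K₁^2*T)*w k :=
        mul_le_mul_of_nonneg_left hSk (by positivity)
      have m2 : Δt*Δt*(6*c₁^2*K₁^2*T*ν₀)*(ν₀*P k) ≤ Δt*Δt*(6*c₁^2*K₁^2*T*ν₀)*W :=
        mul_le_mul_of_nonneg_left hPk (by positivity)
      have m3 : Δt*ν₀^2*(ν₀*‖θ k‖^2) ≤ Δt*ν₀^2*w k :=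
        mul_le_mul_of_nonneg_left hxk (by positivity)
      rw [hD2def]
      linarith [m1, m2, m3]
    have hRHS : ν₀^2 * ∑ k ∈ Finset.Icc 1 m,
        Δt*((3*c₀^2*Δt^2 + 6*c₁^2*K₁^2*T^2*δ^2 + ν₀*c₀^2*(Δt+δ)^2)
          + 3*σ^2*K₁^2*T*(Δt*S k) + 6*c₁^2*K₁^2*T*(Δt*P k) + ν₀*‖θ k‖^2)
        ≤ ν₀^2*(T*D₂) + ν₀^2*((L*Δt)*W) := by
      rw [Finset.mul_sum]
      have h4 := Finset.sum_le_sum hperk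
      have h5 : ∑ k ∈ Finset.Icc 1 m,
          (ν₀^2*Δt*D₂ + Δt*(3*σ^2*K₁^2*T)*w k + Δt*Δt*(6*c₁^2*K₁^2*T*ν₀)*W + Δt*ν₀^2*w k)
          = (m:ℝ)*(ν₀^2*Δt*D₂) + Δt*(3*σ^2*K₁^2*T)*W
            + (m:ℝ)*(Δt*Δt*(6*c₁^2*K₁^2*T*ν₀)*W) + Δt*ν₀^2*W := by
        rw [Finset.sum_add_distrib, Finset.sum_add_distrib, Finset.sum_add_distrib,
          Finset.sum_const, Finset.sum_const, Nat.card_Icc, nsmul_eq_mul, nsmul_eq_mul,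
          ← Finset.mul_sum, ← Finset.mul_sum, ← hWdef]
        simp
      rw [h5] at h4
      have h6 : (m:ℝ)*(ν₀^2*Δt*D₂) ≤ T*(ν₀^2*D₂) := by
        have := mul_le_mul_of_nonneg_right hmT (show 0 ≤ ν₀^2*D₂ by positivity)
        linarith [this]
      have h7 : (m:ℝ)*(Δt*Δt*(6*c₁^2*K₁^2*T*ν₀)*W) ≤ T*(Δt*(6*c₁^2*K₁^2*T*ν₀)*W) := by
        have := mul_le_mul_of_nonneg_right hmT
          (show 0 ≤ Δt*(6*c₁^2*K₁^2*T*ν₀)*W by positivity)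
        linarith [this]
      have hLν : ν₀^2*L = 3*σ^2*K₁^2*T + ν₀^2 + 6*c₁^2*K₁^2*T^2*ν₀ := by
        rw [hLdef]
        field_simp
      have hLν' : ν₀^2*((L*Δt)*W) = (3*σ^2*K₁^2*T + ν₀^2 + 6*c₁^2*K₁^2*T^2*ν₀)*(Δt*W) := by
        rw [← hLν]; ring
      linarith [h4, h6, h7, hLν']
    have h8 : ν₀^2 * w m ≤ ν₀^2*(T*D₂ + (L*Δt)*W) := by
      have h9 := mul_le_mul_of_nonneg_left hsumstep (show (0:ℝ) ≤ ν₀^2 by positivity)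
      linarith [h9, hRHS]
    exact le_of_mul_le_mul_left (by linarith [h8]) (show (0:ℝ) < ν₀^2 by positivity)
  -- Gronwall
  have hε2 : L*Δt ≤ 1/2 := by
    have h1 : L*Δt ≤ L*(1/(2*L)) := mul_le_mul_of_nonneg_left hΔt0 hL0.le
    have h2 : L*(1/(2*L)) = 1/2 := by field_simp
    linarith
  have hgr := gronwall w (T*D₂) (L*Δt) (mul_nonneg hT.le hD20)
    (by positivity) hε2 hw0 N hsum n hn1 hnN
  have hnT : (n:ℝ)*Δt ≤ T := by
    rw [← hNT]
    exact mul_le_mul_of_nonneg_right (Nat.cast_le.mpr hnN) hΔt.le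
  have hexp : (1+2*(L*Δt))^n ≤ Real.exp (2*L*T) := by
    have h1 : (1+2*(L*Δt)) ≤ Real.exp (2*(L*Δt)) := by
      linarith [Real.add_one_le_exp (2*(L*Δt))]
    have h2 : (1+2*(L*Δt))^n ≤ (Real.exp (2*(L*Δt)))^n :=
      pow_le_pow_left₀ (by positivity) h1 n
    rw [← Real.exp_nat_mul] at h2
    have h3 : (n:ℝ)*(2*(L*Δt)) ≤ 2*L*T := by
      have := mul_le_mul_of_nonneg_left hnT (show 0 ≤ 2*L by positivity)
      linarith [this]
    exact h2.trans (Real.exp_le_exp.mpr h3)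
  have hwn : w n ≤ ν₀*Csq*(δ+Δt)^2 := by
    have hDM : D₂ ≤ M*(δ+Δt)^2 := by
      have q1 : Δt^2 ≤ (δ+Δt)^2 := pow_le_pow_left₀ hΔt.le (by linarith) 2
      have q2 : δ^2 ≤ (δ+Δt)^2 := pow_le_pow_left₀ hδ (by linarith) 2
      rw [hD2def, hMdef]
      linarith [mul_le_mul_of_nonneg_left q1 (show (0:ℝ) ≤ 3*c₀^2 by positivity),
        mul_le_mul_of_nonneg_left q2 (show (0:ℝ) ≤ 6*c₁^2*K₁^2*T^2 by positivity),
        sq_nonneg (δ+Δt),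
        mul_le_mul_of_nonneg_left q1 (show (0:ℝ) ≤ ν₀*c₀^2 by positivity)]
    have h1 : w n ≤ 2*(T*D₂)*Real.exp (2*L*T) := by
      have := mul_le_mul_of_nonneg_left hexp (show 0 ≤ 2*(T*D₂) by positivity)
      linarith [hgr, this]
    have h2 : 2*(T*D₂)*Real.exp (2*L*T) ≤ 2*(T*(M*(δ+Δt)^2))*Real.exp (2*L*T) := by
      have h21 := mul_le_mul_of_nonneg_right
        (mul_le_mul_of_nonneg_left hDM (show (0:ℝ) ≤ 2*T by positivity))
        (Real.exp_pos (2*L*T)).le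
      linarith [h21]
    have h3 : ν₀*Csq = 2*T*M*Real.exp (2*L*T) := by
      rw [hCsqdef]
      field_simp
    have h4 : ν₀*Csq*(δ+Δt)^2 = 2*T*M*Real.exp (2*L*T)*(δ+Δt)^2 := by rw [h3]
    linarith [h1, h2, h4]
  -- extract the three bounds
  have hmem : n ∈ Finset.Icc 1 n := Finset.mem_Icc.mpr ⟨hn1, le_refl n⟩
  have hb2 : ‖θ n - θ (n-1)‖^2 ≤ Rq n := by
    simp only [hRqdef]
    exact Finset.single_le_sum (f := fun i => ‖θ i - θ (i-1)‖^2)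
      (fun i _ => sq_nonneg _) hmem
  have he2 : (norm1 (θ n))^2 ≤ S n := by
    simp only [hSdef]
    exact Finset.single_le_sum (f := fun i => (norm1 (θ i))^2)
      (fun i _ => sq_nonneg _) hmem
  have ha : ‖θ n‖^2 ≤ Csq*(δ+Δt)^2 := by
    have h1 : ν₀*‖θ n‖^2 ≤ ν₀*(Csq*(δ+Δt)^2) := by
      have := hxw n
      linarith [hwn, this]
    exact le_of_mul_le_mul_left h1 hν₀
  have hb : ‖θ n - θ (n-1)‖^2 ≤ Csq*(δ+Δt)^2 := by
    have h1 : ν₀*‖θ n - θ (n-1)‖^2 ≤ ν₀*(Csq*(δ+Δt)^2) := by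
      have h2 := hRw n
      have h3 : ν₀*‖θ n - θ (n-1)‖^2 ≤ ν₀*Rq n :=
        mul_le_mul_of_nonneg_left hb2 hν₀.le
      linarith [hwn, h2, h3]
    exact le_of_mul_le_mul_left h1 hν₀
  have he : ν₀*Δt*(norm1 (θ n))^2 ≤ Csq*(δ+Δt)^2 := by
    have h1 : ν₀*(ν₀*Δt*(norm1 (θ n))^2) ≤ ν₀*(Csq*(δ+Δt)^2) := by
      have h2 := hSw n
      have h3 : ν₀^2*Δt*(norm1 (θ n))^2 ≤ ν₀^2*Δt*S n :=
        mul_le_mul_of_nonneg_left he2 (by positivity)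
      linarith [hwn, h2, h3]
    exact le_of_mul_le_mul_left h1 hν₀
  -- convert squares to the linear bound
  have hkey : ∀ t : ℝ, 0 ≤ t → t^2 ≤ Csq*(δ+Δt)^2 → t ≤ Real.sqrt Csq*(δ+Δt) := by
    intro t ht h
    have h2 := Real.sqrt_le_sqrt h
    rw [Real.sqrt_sq ht] at h2
    rwa [Real.sqrt_mul hCsq0.le, Real.sqrt_sq hδΔ] at h2
  have k1 : ‖θ n‖ ≤ Real.sqrt Csq*(δ+Δt) := hkey _ (norm_nonneg _) ha
  have k2 : ‖θ n - θ (n-1)‖ ≤ Real.sqrt Csq*(δ+Δt) := hkey _ (norm_nonneg _) hb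
  have k3 : Real.sqrt (ν₀*Δt)*norm1 (θ n) ≤ Real.sqrt Csq*(δ+Δt) := by
    apply hkey _ (mul_nonneg (Real.sqrt_nonneg _) (hnorm1 _))
    have : (Real.sqrt (ν₀*Δt)*norm1 (θ n))^2 = ν₀*Δt*(norm1 (θ n))^2 := by
      rw [mul_pow, Real.sq_sqrt (by positivity)]
    rw [this]
    exact he
  linarith [k1, k2, k3]
end

section
/- Stability of the fine-grid step of two-grid Algorithm 4.2 (Theorem 4.5, intermediate estimate): There exists a constant C depending only on T, ν₀, μ₀ and K₁ such that the following holds. Let (U_H^n)_{n=0}^N be any sequence in H (the coarse-grid solution) and suppose the fine-grid sequence (U_h^n)_{n=0}^N in H and data f^1,…,f^N ∈ H satisfy, for every 1 ≤ n ≤ N and every v ∈ H, ((U_h^n − U_h^{n−1})/Δt, v) + A(U_h^n, v) + Δt Σ_{i=1}^{n−1} ω_{n,i} B(U_h^i, v) + Δt ω_{n,n} B(U_H^n, v) = (f^n, v). If Δt ≤ min{1/2, 7ν₀²/(8μ₀²K₁²T)}, then for every 1 ≤ n ≤ N: ‖U_h^n‖² + Σ_{i=1}^n ‖U_h^i − U_h^{i−1}‖²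 + (ν₀Δt/4) Σ_{i=1}^n ‖U_h^i‖₁² ≤ C (‖U_h^0‖² + Δt² Σ_{i=1}^n ‖U_H^i‖₁² + Δt Σ_{i=1}^n ‖f^i‖²). -/
open scoped BigOperators RealInnerProductSpace

/-- Young's inequality `2xy ≤ c x² + y²/c`. -/
lemma two_grid_young (x y c : ℝ) (hc : 0 < c) : 2 * x * y ≤ c * x ^ 2 + y ^ 2 / c := by
  have h : c * x ^ 2 + y ^ 2 / c - 2 * x * y = (c * x - y) ^ 2 / c := by
    field_simp; ring
  have h2 : 0 ≤ (c * x - y) ^ 2 / c := div_nonneg (sq_nonneg _) hc.le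
  linarith

set_option maxHeartbeats 1000000 in
/-- Stability of the fine-grid step of two-grid Algorithm 4.2
(Theorem 4.5, intermediate estimate). -/
theorem two_grid_alg42_stability
    (T ν₀ μ₀ K₁ : ℝ) (hT : 0 < T) (hν₀ : 0 < ν₀) (hμ₀ : 0 < μ₀) (hK₁ : 0 < K₁) :
    ∃ C : ℝ, 0 < C ∧
      ∀ (H : Type) [NormedAddCommGroup H] [InnerProductSpace ℝ H]
        (norm1 : H → ℝ), (∀ x, 0 ≤ norm1 x) →
      ∀ A : H →ₗ[ℝ] H →ₗ[ℝ] ℝ, (∀ v, ν₀ * (norm1 v) ^ 2 ≤ A v v) →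
      ∀ Δt : ℝ, 0 < Δt → ∀ N : ℕ, 1 ≤ N → (N : ℝ) * Δt = T →
      ∀ ω : ℕ → ℕ → ℝ, (∀ n i, 1 ≤ i → i ≤ n → n ≤ N → |ω n i| ≤ K₁) →
      ∀ B : H → H → ℝ, (∀ u v, |B u v| ≤ μ₀ * norm1 u * norm1 v) →
      ∀ UH Uh f : ℕ → H,
        (∀ n, 1 ≤ n → n ≤ N → ∀ v : H,
          ⟪Uh n - Uh (n - 1), v⟫ / Δt + A (Uh n) v
            + Δt * ∑ i ∈ Finset.Icc 1 (n - 1), ω n i * B (Uh i) v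
            + Δt * ω n n * B (UH n) v = ⟪f n, v⟫) →
        Δt ≤ min (1 / 2) (7 * ν₀ ^ 2 / (8 * μ₀ ^ 2 * K₁ ^ 2 * T)) →
        ∀ n, 1 ≤ n → n ≤ N →
          ‖Uh n‖ ^ 2 + ∑ i ∈ Finset.Icc 1 n, ‖Uh i - Uh (i - 1)‖ ^ 2
              + (ν₀ * Δt / 4) * ∑ i ∈ Finset.Icc 1 n, (norm1 (Uh i)) ^ 2
            ≤ C * (‖Uh 0‖ ^ 2
                + Δt ^ 2 * ∑ i ∈ Finset.Icc 1 n, (norm1 (UH i)) ^ 2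
                + Δt * ∑ i ∈ Finset.Icc 1 n, ‖f i‖ ^ 2) := by
  have hc₁ : (0:ℝ) < K₁ ^ 2 * μ₀ ^ 2 * T / ν₀ ^ 2 := by positivity
  have hc₂ : (0:ℝ) < K₁ ^ 2 * μ₀ ^ 2 / ν₀ := by positivity
  set c₁ : ℝ := K₁ ^ 2 * μ₀ ^ 2 * T / ν₀ ^ 2 with hc₁def
  set c₂ : ℝ := K₁ ^ 2 * μ₀ ^ 2 / ν₀ with hc₂def
  refine ⟨(2 + 2 * c₂) * Real.exp ((2 + 2 * c₁) * T), by positivity, ?_⟩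
  intro H _ _ norm1 hnorm1 A hA Δt hΔt N hN hNT ω hω B hB UH Uh f heq hΔtsmall n hn1 hnN
  have hΔt2 : Δt ≤ 1 / 2 := le_trans hΔtsmall (min_le_left _ _)
  have hEnn : ∀ m : ℕ, (0:ℝ) ≤ ∑ i ∈ Finset.Icc 1 m, norm1 (Uh i) ^ 2 :=
    fun m => Finset.sum_nonneg fun i _ => sq_nonneg _
  have hDnn : ∀ m : ℕ, (0:ℝ) ≤ ∑ i ∈ Finset.Icc 1 m, ‖Uh i - Uh (i - 1)‖ ^ 2 :=
    fun m => Finset.sum_nonneg fun i _ => sq_nonneg _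
  -- per-step estimate
  have step : ∀ k : ℕ, k + 1 ≤ N →
      ‖Uh (k+1)‖ ^ 2 - ‖Uh k‖ ^ 2 + ‖Uh (k+1) - Uh k‖ ^ 2
          + ν₀ * Δt / 2 * norm1 (Uh (k+1)) ^ 2
        ≤ Δt * ‖f (k+1)‖ ^ 2 + c₂ * Δt ^ 2 * norm1 (UH (k+1)) ^ 2
          + Δt * ‖Uh (k+1)‖ ^ 2
          + c₁ * ν₀ * Δt ^ 2 * ∑ i ∈ Finset.Icc 1 k, norm1 (Uh i) ^ 2 := by
    intro k hkN
    have h1k : 1 ≤ k + 1 := Nat.le_add_left 1 k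
    have hEq := heq (k+1) h1k hkN (Uh (k+1))
    simp only [Nat.add_sub_cancel] at hEq
    set u := Uh (k+1) with hu
    set p := Uh k with hp
    set SB := ∑ i ∈ Finset.Icc 1 k, ω (k+1) i * B (Uh i) u with hSBdef
    set E0 := ∑ i ∈ Finset.Icc 1 k, norm1 (Uh i) ^ 2 with hE0def
    have hip : ⟪u - p, u⟫ = (‖u‖ ^ 2 - ‖p‖ ^ 2 + ‖u - p‖ ^ 2) / 2 := by
      have h1 : ‖u - p‖ ^ 2 = ‖u‖ ^ 2 - 2 * ⟪u, p⟫ + ‖p‖ ^ 2 := norm_sub_sq_real u p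
      rw [inner_sub_left, real_inner_self_eq_norm_sq, real_inner_comm]
      linarith
    rw [hip] at hEq
    have h3 : (‖u‖ ^ 2 - ‖p‖ ^ 2 + ‖u - p‖ ^ 2) / (2 * Δt)
        = ⟪f (k+1), u⟫ - A u u - Δt * SB - Δt * ω (k+1) (k+1) * B (UH (k+1)) u := by
      rw [← div_div]; linarith
    have main : ‖u‖ ^ 2 - ‖p‖ ^ 2 + ‖u - p‖ ^ 2
        = 2 * Δt * ⟪f (k+1), u⟫ - 2 * Δt * (A u u) - 2 * Δt ^ 2 * SB
          - 2 * Δt ^ 2 * (ω (k+1) (k+1)) * B (UH (k+1)) u := by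
      have h4 := (div_eq_iff (by positivity : (2 * Δt) ≠ 0)).mp h3
      rw [h4]; ring
    -- bound on the data term
    have bF : 2 * Δt * ⟪f (k+1), u⟫ ≤ Δt * ‖f (k+1)‖ ^ 2 + Δt * ‖u‖ ^ 2 := by
      have h5 : ⟪f (k+1), u⟫ ≤ ‖f (k+1)‖ * ‖u‖ := real_inner_le_norm _ _
      have h6 : 2 * Δt * ⟪f (k+1), u⟫ ≤ 2 * Δt * (‖f (k+1)‖ * ‖u‖) :=
        mul_le_mul_of_nonneg_left h5 (by positivity)
      nlinarith [mul_nonneg hΔt.le (sq_nonneg (‖f (k+1)‖ - ‖u‖))]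
    -- coercivity
    have bA : 2 * Δt * (ν₀ * norm1 u ^ 2) ≤ 2 * Δt * (A u u) :=
      mul_le_mul_of_nonneg_left (hA u) (by positivity)
    -- history term
    set S := ∑ i ∈ Finset.Icc 1 k, norm1 (Uh i) with hSdef
    have hSnn : 0 ≤ S := Finset.sum_nonneg fun i _ => hnorm1 _
    have babsSB : |SB| ≤ K₁ * μ₀ * S * norm1 u := by
      calc |SB| ≤ ∑ i ∈ Finset.Icc 1 k, |ω (k+1) i * B (Uh i) u| :=
            Finset.abs_sum_le_sum_abs _ _
        _ ≤ ∑ i ∈ Finset.Icc 1 k, K₁ * (μ₀ * norm1 (Uh i) * norm1 u) := by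
            apply Finset.sum_le_sum
            intro i hi
            rw [Finset.mem_Icc] at hi
            rw [abs_mul]
            exact mul_le_mul (hω (k+1) i hi.1 (hi.2.trans (Nat.le_succ k)) hkN) (hB _ _)
              (abs_nonneg _) hK₁.le
        _ = K₁ * μ₀ * S * norm1 u := by
            rw [hSdef]
            simp only [Finset.mul_sum, Finset.sum_mul]
            exact Finset.sum_congr rfl fun i _ => by ring
    have hS2 : S ^ 2 ≤ (k : ℝ) * E0 := by
      have h7 : S ^ 2 ≤ ((Finset.Icc 1 k).card : ℝ) * ∑ i ∈ Finset.Icc 1 k, norm1 (Uh i) ^ 2 := by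
        exact_mod_cast sq_sum_le_card_mul_sum_sq (s := Finset.Icc 1 k) (f := fun i => norm1 (Uh i))
      rwa [Nat.card_Icc, Nat.add_sub_cancel] at h7
    have hkT : (k : ℝ) * Δt ≤ T := by
      rw [← hNT]
      have : (k : ℝ) ≤ (N : ℝ) := by exact_mod_cast (Nat.le_succ k).trans hkN
      exact mul_le_mul_of_nonneg_right this hΔt.le
    have hE0nn : 0 ≤ E0 := hEnn k
    have bHist : -(2 * Δt ^ 2 * SB) ≤ ν₀ * Δt * norm1 u ^ 2 + c₁ * ν₀ * Δt ^ 2 * E0 := by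
      have h8 : -(2 * Δt ^ 2 * SB) ≤ 2 * Δt ^ 2 * (K₁ * μ₀ * S * norm1 u) := by
        have h9 : -SB ≤ |SB| := neg_le_abs SB
        have h10 : 2 * Δt ^ 2 * (-SB) ≤ 2 * Δt ^ 2 * (K₁ * μ₀ * S * norm1 u) :=
          mul_le_mul_of_nonneg_left (h9.trans babsSB) (by positivity)
        linarith
      have hy := two_grid_young (norm1 u) (Δt ^ 2 * (K₁ * μ₀ * S)) (ν₀ * Δt) (by positivity)
      have hid : (Δt ^ 2 * (K₁ * μ₀ * S)) ^ 2 / (ν₀ * Δt)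
          = K₁ ^ 2 * μ₀ ^ 2 / ν₀ * (Δt ^ 3 * S ^ 2) := by
        field_simp
      have key : Δt ^ 3 * S ^ 2 ≤ T * (Δt ^ 2 * E0) := by
        have h12 : Δt ^ 3 * S ^ 2 ≤ Δt ^ 3 * ((k : ℝ) * E0) :=
          mul_le_mul_of_nonneg_left hS2 (by positivity)
        have h13 : Δt ^ 3 * ((k : ℝ) * E0) = ((k : ℝ) * Δt) * (Δt ^ 2 * E0) := by ring
        have h14 : ((k : ℝ) * Δt) * (Δt ^ 2 * E0) ≤ T * (Δt ^ 2 * E0) :=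
          mul_le_mul_of_nonneg_right hkT (by positivity)
        linarith
      have h15 : K₁ ^ 2 * μ₀ ^ 2 / ν₀ * (Δt ^ 3 * S ^ 2)
          ≤ K₁ ^ 2 * μ₀ ^ 2 / ν₀ * (T * (Δt ^ 2 * E0)) :=
        mul_le_mul_of_nonneg_left key (by positivity)
      have h16 : K₁ ^ 2 * μ₀ ^ 2 / ν₀ * (T * (Δt ^ 2 * E0)) = c₁ * ν₀ * Δt ^ 2 * E0 := by
        rw [hc₁def]; field_simp
      have h17 : 2 * Δt ^ 2 * (K₁ * μ₀ * S * norm1 u)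
          = 2 * norm1 u * (Δt ^ 2 * (K₁ * μ₀ * S)) := by ring
      linarith [hy, h8]
    -- coarse-grid term
    have bUH : -(2 * Δt ^ 2 * (ω (k+1) (k+1)) * B (UH (k+1)) u)
        ≤ ν₀ * Δt / 2 * norm1 u ^ 2 + c₂ * Δt ^ 2 * norm1 (UH (k+1)) ^ 2 := by
      have hωn : |ω (k+1) (k+1)| ≤ K₁ := hω (k+1) (k+1) h1k le_rfl hkN
      have hBn : |B (UH (k+1)) u| ≤ μ₀ * norm1 (UH (k+1)) * norm1 u := hB _ _
      have h18 : -(2 * Δt ^ 2 * (ω (k+1) (k+1)) * B (UH (k+1)) u)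
          ≤ 2 * Δt ^ 2 * (K₁ * (μ₀ * norm1 (UH (k+1)) * norm1 u)) := by
        have h19 : -(ω (k+1) (k+1) * B (UH (k+1)) u) ≤ |ω (k+1) (k+1) * B (UH (k+1)) u| :=
          neg_le_abs _
        have h20 : |ω (k+1) (k+1) * B (UH (k+1)) u| ≤ K₁ * (μ₀ * norm1 (UH (k+1)) * norm1 u) := by
          rw [abs_mul]; exact mul_le_mul hωn hBn (abs_nonneg _) hK₁.le
        have h21 : 2 * Δt ^ 2 * (-(ω (k+1) (k+1) * B (UH (k+1)) u))
            ≤ 2 * Δt ^ 2 * (K₁ * (μ₀ * norm1 (UH (k+1)) * norm1 u)) :=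
          mul_le_mul_of_nonneg_left (h19.trans h20) (by positivity)
        linarith
      have hy := two_grid_young (norm1 u) (Δt ^ 2 * (K₁ * μ₀ * norm1 (UH (k+1))))
        (ν₀ * Δt / 2) (by positivity)
      have hid : (Δt ^ 2 * (K₁ * μ₀ * norm1 (UH (k+1)))) ^ 2 / (ν₀ * Δt / 2)
          = 2 * Δt ^ 3 * (K₁ ^ 2 * μ₀ ^ 2 / ν₀ * norm1 (UH (k+1)) ^ 2) := by
        field_simp
      have h22 : 2 * Δt ^ 3 * (K₁ ^ 2 * μ₀ ^ 2 / ν₀ * norm1 (UH (k+1)) ^ 2)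
          ≤ Δt ^ 2 * (K₁ ^ 2 * μ₀ ^ 2 / ν₀ * norm1 (UH (k+1)) ^ 2) := by
        have h23 : 2 * Δt ^ 3 ≤ Δt ^ 2 := by
          calc 2 * Δt ^ 3 = Δt ^ 2 * (2 * Δt) := by ring
            _ ≤ Δt ^ 2 * 1 := mul_le_mul_of_nonneg_left (by linarith) (sq_nonneg Δt)
            _ = Δt ^ 2 := mul_one _
        exact mul_le_mul_of_nonneg_right h23 (by positivity)
      have h24 : Δt ^ 2 * (K₁ ^ 2 * μ₀ ^ 2 / ν₀ * norm1 (UH (k+1)) ^ 2)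
          = c₂ * Δt ^ 2 * norm1 (UH (k+1)) ^ 2 := by rw [hc₂def]; ring
      have h25 : 2 * Δt ^ 2 * (K₁ * (μ₀ * norm1 (UH (k+1)) * norm1 u))
          = 2 * norm1 u * (Δt ^ 2 * (K₁ * μ₀ * norm1 (UH (k+1)))) := by ring
      linarith [hy, h18]
    linarith [main, bF, bA, bHist, bUH]
  -- one-step estimate for the accumulated quantity Y
  have Ystep : ∀ k : ℕ, k + 1 ≤ N →
      ‖Uh (k+1)‖ ^ 2 + (∑ i ∈ Finset.Icc 1 (k+1), ‖Uh i - Uh (i - 1)‖ ^ 2)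
          + ν₀ * Δt / 2 * ∑ i ∈ Finset.Icc 1 (k+1), norm1 (Uh i) ^ 2
        ≤ (1 + 2 * Δt) * (1 + 2 * c₁ * Δt)
            * (‖Uh k‖ ^ 2 + (∑ i ∈ Finset.Icc 1 k, ‖Uh i - Uh (i - 1)‖ ^ 2)
              + ν₀ * Δt / 2 * ∑ i ∈ Finset.Icc 1 k, norm1 (Uh i) ^ 2)
          + (2 * Δt * ‖f (k+1)‖ ^ 2 + 2 * c₂ * Δt ^ 2 * norm1 (UH (k+1)) ^ 2) := by
    intro k hkN
    have hstep := step k hkN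
    have hsplitD : (∑ i ∈ Finset.Icc 1 (k+1), ‖Uh i - Uh (i - 1)‖ ^ 2)
        = (∑ i ∈ Finset.Icc 1 k, ‖Uh i - Uh (i - 1)‖ ^ 2) + ‖Uh (k+1) - Uh k‖ ^ 2 := by
      rw [Finset.sum_Icc_succ_top (Nat.le_add_left 1 k)]
      simp
    have hsplitE : (∑ i ∈ Finset.Icc 1 (k+1), norm1 (Uh i) ^ 2)
        = (∑ i ∈ Finset.Icc 1 k, norm1 (Uh i) ^ 2) + norm1 (Uh (k+1)) ^ 2 :=
      Finset.sum_Icc_succ_top (Nat.le_add_left 1 k) _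
    set a1 := ‖Uh (k+1)‖ ^ 2 with ha1
    set a0 := ‖Uh k‖ ^ 2 with ha0
    set d1 := ‖Uh (k+1) - Uh k‖ ^ 2 with hd1
    set D0 := ∑ i ∈ Finset.Icc 1 k, ‖Uh i - Uh (i - 1)‖ ^ 2 with hD0
    set E0 := ∑ i ∈ Finset.Icc 1 k, norm1 (Uh i) ^ 2 with hE0
    set e1 := norm1 (Uh (k+1)) ^ 2 with he1
    set rr := 2 * Δt * ‖f (k+1)‖ ^ 2 + 2 * c₂ * Δt ^ 2 * norm1 (UH (k+1)) ^ 2 with hrr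
    rw [hsplitD, hsplitE]
    set Y1 := a1 + (D0 + d1) + ν₀ * Δt / 2 * (E0 + e1) with hY1
    set Y0 := a0 + D0 + ν₀ * Δt / 2 * E0 with hY0
    have ha1nn : 0 ≤ a1 := sq_nonneg _
    have ha0nn : 0 ≤ a0 := sq_nonneg _
    have hd1nn : 0 ≤ d1 := sq_nonneg _
    have hD0nn : 0 ≤ D0 := hDnn k
    have hE0nn : 0 ≤ E0 := hEnn k
    have he1nn : 0 ≤ e1 := sq_nonneg _
    have hY1nn : 0 ≤ Y1 := by
      have : 0 ≤ ν₀ * Δt / 2 * (E0 + e1) := by positivity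
      rw [hY1]; linarith
    have hrrnn : 0 ≤ rr := by rw [hrr]; positivity
    -- absorb the history term
    have habs : c₁ * ν₀ * Δt ^ 2 * E0 ≤ 2 * c₁ * Δt * Y0 := by
      have h1 : ν₀ * Δt / 2 * E0 ≤ Y0 := by rw [hY0]; linarith
      have h2 : (2 * c₁ * Δt) * (ν₀ * Δt / 2 * E0) ≤ (2 * c₁ * Δt) * Y0 :=
        mul_le_mul_of_nonneg_left h1 (by positivity)
      have h3 : c₁ * ν₀ * Δt ^ 2 * E0 = 2 * c₁ * Δt * (ν₀ * Δt / 2 * E0) := by ring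
      rw [h3]; exact h2
    have hΔta : Δt * a1 ≤ Δt * Y1 := by
      have h1 : a1 ≤ Y1 := by
        have : 0 ≤ ν₀ * Δt / 2 * (E0 + e1) := by positivity
        rw [hY1]; linarith
      exact mul_le_mul_of_nonneg_left h1 hΔt.le
    clear_value a1 a0 d1 D0 E0 e1 rr Y1 Y0
    have hZ : (1 - Δt) * Y1 ≤ (1 + 2 * c₁ * Δt) * Y0 + rr / 2 := by
      have : Y1 - Y0 = a1 - a0 + d1 + ν₀ * Δt / 2 * e1 := by rw [hY1, hY0]; ring
      linarith only [hstep, habs, hΔta, this, hrr]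
    have h8 : (1 + 2 * Δt) * ((1 - Δt) * Y1)
        ≤ (1 + 2 * Δt) * ((1 + 2 * c₁ * Δt) * Y0 + rr / 2) :=
      mul_le_mul_of_nonneg_left hZ (by linarith)
    have h9 : 0 ≤ Δt * (1 - 2 * Δt) * Y1 :=
      mul_nonneg (mul_nonneg hΔt.le (by linarith)) hY1nn
    have h10 : 0 ≤ (1 - 2 * Δt) * (rr / 2) := mul_nonneg (by linarith) (by linarith)
    linarith only [h8, h9, h10]
  -- discrete Gronwall
  have gron : ∀ m : ℕ, m ≤ N →
      ‖Uh m‖ ^ 2 + (∑ i ∈ Finset.Icc 1 m, ‖Uh i - Uh (i - 1)‖ ^ 2)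
          + ν₀ * Δt / 2 * ∑ i ∈ Finset.Icc 1 m, norm1 (Uh i) ^ 2
        ≤ ((1 + 2 * Δt) * (1 + 2 * c₁ * Δt)) ^ m
            * (‖Uh 0‖ ^ 2 + ∑ i ∈ Finset.Icc 1 m,
                (2 * Δt * ‖f i‖ ^ 2 + 2 * c₂ * Δt ^ 2 * norm1 (UH i) ^ 2)) := by
    intro m
    induction m with
    | zero => intro _; simp
    | succ k ih =>
      intro hkN
      have hk := ih ((Nat.le_succ k).trans hkN)
      have hY := Ystep k hkN
      set ρ := (1 + 2 * Δt) * (1 + 2 * c₁ * Δt) with hρ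
      have hρ1 : 1 ≤ ρ := by rw [hρ]; nlinarith [hΔt.le, hc₁.le, mul_nonneg hc₁.le hΔt.le]
      have hρnn : 0 ≤ ρ := by linarith
      have hρk1 : 1 ≤ ρ ^ (k+1) := one_le_pow₀ hρ1
      have hsplitR : (∑ i ∈ Finset.Icc 1 (k+1),
            (2 * Δt * ‖f i‖ ^ 2 + 2 * c₂ * Δt ^ 2 * norm1 (UH i) ^ 2))
          = (∑ i ∈ Finset.Icc 1 k,
              (2 * Δt * ‖f i‖ ^ 2 + 2 * c₂ * Δt ^ 2 * norm1 (UH i) ^ 2))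
            + (2 * Δt * ‖f (k+1)‖ ^ 2 + 2 * c₂ * Δt ^ 2 * norm1 (UH (k+1)) ^ 2) :=
      Finset.sum_Icc_succ_top (Nat.le_add_left 1 k) _
    -- combine
      have hrk1nn : 0 ≤ 2 * Δt * ‖f (k+1)‖ ^ 2 + 2 * c₂ * Δt ^ 2 * norm1 (UH (k+1)) ^ 2 := by
        positivity
      have hstep2 : ‖Uh (k+1)‖ ^ 2 + (∑ i ∈ Finset.Icc 1 (k+1), ‖Uh i - Uh (i - 1)‖ ^ 2)
          + ν₀ * Δt / 2 * ∑ i ∈ Finset.Icc 1 (k+1), norm1 (Uh i) ^ 2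
          ≤ ρ * (ρ ^ k * (‖Uh 0‖ ^ 2 + ∑ i ∈ Finset.Icc 1 k,
              (2 * Δt * ‖f i‖ ^ 2 + 2 * c₂ * Δt ^ 2 * norm1 (UH i) ^ 2)))
            + (2 * Δt * ‖f (k+1)‖ ^ 2 + 2 * c₂ * Δt ^ 2 * norm1 (UH (k+1)) ^ 2) := by
        have h1 := mul_le_mul_of_nonneg_left hk hρnn
        linarith [hY, h1]
      rw [hsplitR]
      have hpow : ρ * ρ ^ k = ρ ^ (k+1) := (pow_succ ρ k).symm ▸ (mul_comm _ _)
      have h2 : ρ * (ρ ^ k * (‖Uh 0‖ ^ 2 + ∑ i ∈ Finset.Icc 1 k,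
              (2 * Δt * ‖f i‖ ^ 2 + 2 * c₂ * Δt ^ 2 * norm1 (UH i) ^ 2)))
          = ρ ^ (k+1) * (‖Uh 0‖ ^ 2 + ∑ i ∈ Finset.Icc 1 k,
              (2 * Δt * ‖f i‖ ^ 2 + 2 * c₂ * Δt ^ 2 * norm1 (UH i) ^ 2)) := by
        rw [← mul_assoc, hpow]
      have h3 : (2 * Δt * ‖f (k+1)‖ ^ 2 + 2 * c₂ * Δt ^ 2 * norm1 (UH (k+1)) ^ 2)
          ≤ ρ ^ (k+1) * (2 * Δt * ‖f (k+1)‖ ^ 2 + 2 * c₂ * Δt ^ 2 * norm1 (UH (k+1)) ^ 2) := by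
        nlinarith [hρk1, hrk1nn]
      calc ‖Uh (k+1)‖ ^ 2 + (∑ i ∈ Finset.Icc 1 (k+1), ‖Uh i - Uh (i - 1)‖ ^ 2)
          + ν₀ * Δt / 2 * ∑ i ∈ Finset.Icc 1 (k+1), norm1 (Uh i) ^ 2
          ≤ ρ ^ (k+1) * (‖Uh 0‖ ^ 2 + ∑ i ∈ Finset.Icc 1 k,
              (2 * Δt * ‖f i‖ ^ 2 + 2 * c₂ * Δt ^ 2 * norm1 (UH i) ^ 2))
            + (2 * Δt * ‖f (k+1)‖ ^ 2 + 2 * c₂ * Δt ^ 2 * norm1 (UH (k+1)) ^ 2) := by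
            rw [← h2]; exact hstep2
        _ ≤ ρ ^ (k+1) * (‖Uh 0‖ ^ 2 + ∑ i ∈ Finset.Icc 1 k,
              (2 * Δt * ‖f i‖ ^ 2 + 2 * c₂ * Δt ^ 2 * norm1 (UH i) ^ 2))
            + ρ ^ (k+1) * (2 * Δt * ‖f (k+1)‖ ^ 2 + 2 * c₂ * Δt ^ 2 * norm1 (UH (k+1)) ^ 2) := by
            linarith [h3]
        _ = ρ ^ (k+1) * (‖Uh 0‖ ^ 2 + ((∑ i ∈ Finset.Icc 1 k,
              (2 * Δt * ‖f i‖ ^ 2 + 2 * c₂ * Δt ^ 2 * norm1 (UH i) ^ 2))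
            + (2 * Δt * ‖f (k+1)‖ ^ 2 + 2 * c₂ * Δt ^ 2 * norm1 (UH (k+1)) ^ 2))) := by ring
  -- bound the growth factor by the exponential
  have hρexp : ((1 + 2 * Δt) * (1 + 2 * c₁ * Δt)) ^ n ≤ Real.exp ((2 + 2 * c₁) * T) := by
    have e1 : 1 + 2 * Δt ≤ Real.exp (2 * Δt) := by
      have := Real.add_one_le_exp (2 * Δt); linarith
    have e2 : 1 + 2 * c₁ * Δt ≤ Real.exp (2 * c₁ * Δt) := by
      have := Real.add_one_le_exp (2 * c₁ * Δt); linarith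
    have e3 : (1 + 2 * Δt) * (1 + 2 * c₁ * Δt) ≤ Real.exp ((2 + 2 * c₁) * Δt) := by
      calc (1 + 2 * Δt) * (1 + 2 * c₁ * Δt)
          ≤ Real.exp (2 * Δt) * Real.exp (2 * c₁ * Δt) :=
            mul_le_mul e1 e2 (by positivity) (Real.exp_pos _).le
        _ = Real.exp ((2 + 2 * c₁) * Δt) := by rw [← Real.exp_add]; ring_nf
    have hnT : (n : ℝ) * Δt ≤ T := by
      rw [← hNT]
      exact mul_le_mul_of_nonneg_right (by exact_mod_cast hnN) hΔt.le
    calc ((1 + 2 * Δt) * (1 + 2 * c₁ * Δt)) ^ n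
        ≤ (Real.exp ((2 + 2 * c₁) * Δt)) ^ n := by
          apply pow_le_pow_left₀ (by positivity) e3
      _ = Real.exp ((n : ℝ) * ((2 + 2 * c₁) * Δt)) := (Real.exp_nat_mul _ n).symm
      _ ≤ Real.exp ((2 + 2 * c₁) * T) := by
          apply Real.exp_le_exp.mpr
          nlinarith [hnT, hc₁.le, mul_nonneg (by linarith [hc₁.le] : (0:ℝ) ≤ 2 + 2 * c₁)
            (by linarith : (0:ℝ) ≤ T - (n : ℝ) * Δt)]
  -- put everything together
  have hg := gron n hnN
  set Q := ‖Uh 0‖ ^ 2 + ∑ i ∈ Finset.Icc 1 n,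
      (2 * Δt * ‖f i‖ ^ 2 + 2 * c₂ * Δt ^ 2 * norm1 (UH i) ^ 2) with hQdef
  have hQnn : 0 ≤ Q := by
    rw [hQdef]
    have : (0:ℝ) ≤ ∑ i ∈ Finset.Icc 1 n,
        (2 * Δt * ‖f i‖ ^ 2 + 2 * c₂ * Δt ^ 2 * norm1 (UH i) ^ 2) :=
      Finset.sum_nonneg fun i _ => by positivity
    positivity
  have hMQ : ((1 + 2 * Δt) * (1 + 2 * c₁ * Δt)) ^ n * Q
      ≤ Real.exp ((2 + 2 * c₁) * T) * Q := mul_le_mul_of_nonneg_right hρexp hQnn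
  have hQsplit : Q = ‖Uh 0‖ ^ 2 + 2 * Δt * (∑ i ∈ Finset.Icc 1 n, ‖f i‖ ^ 2)
      + 2 * c₂ * Δt ^ 2 * ∑ i ∈ Finset.Icc 1 n, norm1 (UH i) ^ 2 := by
    rw [hQdef, Finset.sum_add_distrib, ← Finset.mul_sum, ← Finset.mul_sum]
    ring
  have hSg : (0:ℝ) ≤ ∑ i ∈ Finset.Icc 1 n, ‖f i‖ ^ 2 :=
    Finset.sum_nonneg fun i _ => sq_nonneg _
  have hSh : (0:ℝ) ≤ ∑ i ∈ Finset.Icc 1 n, norm1 (UH i) ^ 2 :=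
    Finset.sum_nonneg fun i _ => sq_nonneg _
  have hQle : Q ≤ (2 + 2 * c₂) * (‖Uh 0‖ ^ 2
      + Δt ^ 2 * (∑ i ∈ Finset.Icc 1 n, norm1 (UH i) ^ 2)
      + Δt * ∑ i ∈ Finset.Icc 1 n, ‖f i‖ ^ 2) := by
    rw [hQsplit]
    have p1 : (0:ℝ) ≤ ‖Uh 0‖ ^ 2 := sq_nonneg _
    have p2 : (0:ℝ) ≤ c₂ * ‖Uh 0‖ ^ 2 := mul_nonneg hc₂.le p1
    have p3 : (0:ℝ) ≤ c₂ * (Δt * ∑ i ∈ Finset.Icc 1 n, ‖f i‖ ^ 2) :=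
      mul_nonneg hc₂.le (mul_nonneg hΔt.le hSg)
    have p4 : (0:ℝ) ≤ Δt ^ 2 * ∑ i ∈ Finset.Icc 1 n, norm1 (UH i) ^ 2 :=
      mul_nonneg (sq_nonneg Δt) hSh
    linarith only [p1, p2, p3, p4]
  have hM : (0:ℝ) < Real.exp ((2 + 2 * c₁) * T) := Real.exp_pos _
  have hfinal : Real.exp ((2 + 2 * c₁) * T) * Q
      ≤ (2 + 2 * c₂) * Real.exp ((2 + 2 * c₁) * T) * (‖Uh 0‖ ^ 2
        + Δt ^ 2 * (∑ i ∈ Finset.Icc 1 n, norm1 (UH i) ^ 2)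
        + Δt * ∑ i ∈ Finset.Icc 1 n, ‖f i‖ ^ 2) := by
    have h1 := mul_le_mul_of_nonneg_left hQle hM.le
    linarith [h1]
  have hquarter : (ν₀ * Δt / 4) * ∑ i ∈ Finset.Icc 1 n, norm1 (Uh i) ^ 2
      ≤ ν₀ * Δt / 2 * ∑ i ∈ Finset.Icc 1 n, norm1 (Uh i) ^ 2 := by
    have h1 : 0 ≤ ν₀ * Δt * ∑ i ∈ Finset.Icc 1 n, norm1 (Uh i) ^ 2 :=
      mul_nonneg (by positivity) (hEnn n)
    nlinarith [h1]
  calc ‖Uh n‖ ^ 2 + (∑ i ∈ Finset.Icc 1 n, ‖Uh i - Uh (i - 1)‖ ^ 2)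
      + (ν₀ * Δt / 4) * ∑ i ∈ Finset.Icc 1 n, norm1 (Uh i) ^ 2
      ≤ ‖Uh n‖ ^ 2 + (∑ i ∈ Finset.Icc 1 n, ‖Uh i - Uh (i - 1)‖ ^ 2)
        + ν₀ * Δt / 2 * ∑ i ∈ Finset.Icc 1 n, norm1 (Uh i) ^ 2 := by linarith [hquarter]
    _ ≤ ((1 + 2 * Δt) * (1 + 2 * c₁ * Δt)) ^ n * Q := hg
    _ ≤ Real.exp ((2 + 2 * c₁) * T) * Q := hMQ
    _ ≤ (2 + 2 * c₂) * Real.exp ((2 + 2 * c₁) * T) * (‖Uh 0‖ ^ 2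
        + Δt ^ 2 * (∑ i ∈ Finset.Icc 1 n, norm1 (UH i) ^ 2)
        + Δt * ∑ i ∈ Finset.Icc 1 n, ‖f i‖ ^ 2) := hfinal
end

section
/- A priori error estimate for two-grid Algorithm 4.2 (core of Theorem 4.6): There exists a constant C depending only on T, ν₀, μ_B and K₁ such that the following holds for every time step Δt > 0 with NΔt = T. Let δ ≥ 0 and let (W^n)_{n=0}^N be a sequence in H with W^0 = 0 such that for every 1 ≤ n ≤ N and every v ∈ H, ((W^n − W^{n−1})/Δt, v) + A(W^n, v) + Δt Σ_{i=1}^{n−1} ω_{n,i} G_i(v) + Δt ω_{n,n} E_n(v) = 0, where the functionals G_i, E_n : H → ℝ satisfy |G_i(v)| ≤ μ_B ‖W^i‖₁ ‖v‖₁ and |E_n(v)| ≤ μ_B δ ‖v‖₁ for all v ∈ H. Then for every 1 ≤ n ≤ N: ‖W^n‖² + Σ_{i=1}^n ‖W^i − W^{i−1}‖² + ν₀ Δt Σ_{i=1}^n ‖W^i‖₁² ≤ C Δt δ²; in particular ‖W^n‖ ≤ C^{1/2} √Δt δ. -/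
set_option maxHeartbeats 1000000


open scoped BigOperators RealInnerProductSpace

private lemma young_aux (ε p q : ℝ) (hε : 0 < ε) : 2*p*q ≤ ε*p^2 + q^2/ε := by
  have h : 0 ≤ (ε*p - q)^2 := sq_nonneg _
  have h2 : ε*(ε*p^2 + q^2/ε - 2*p*q) = (ε*p - q)^2 := by
    field_simp; ring
  nlinarith [h, hε]

private lemma inner_id {H : Type} [NormedAddCommGroup H] [InnerProductSpace ℝ H]
    (x y : H) : ⟪x - y, x⟫ = (‖x‖^2 - ‖y‖^2 + ‖x - y‖^2)/2 := by
  have h1 := norm_sub_sq_real x y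
  have h2 : ⟪x - y, x⟫ = ‖x‖^2 - ⟪x, y⟫ := by
    rw [inner_sub_left, real_inner_self_eq_norm_sq, real_inner_comm y x]
  linarith

private lemma gronwall_aux (M : ℕ) (F : ℕ → ℝ) (g β : ℝ) (hg : 0 ≤ g) (hβ : 0 ≤ β)
    (h0 : F 0 ≤ g)
    (hrec : ∀ m, 1 ≤ m → m ≤ M → F m ≤ β * (∑ n ∈ Finset.range m, F n) + g) :
    ∀ m, m ≤ M → F m ≤ g * (1+β)^m := by
  intro m
  induction m using Nat.strong_induction_on with
  | _ m ih =>
    intro hmM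
    match m with
    | 0 => simpa using h0
    | (k+1) =>
      have h1 := hrec (k+1) (Nat.succ_le_succ (Nat.zero_le k)) hmM
      have h2 : ∑ n ∈ Finset.range (k+1), F n
          ≤ ∑ n ∈ Finset.range (k+1), g * (1+β)^n := by
        refine Finset.sum_le_sum fun n hn => ?_
        exact ih n (Finset.mem_range.mp hn)
          (le_trans (Nat.le_of_lt (Finset.mem_range.mp hn)) hmM)
      have h3 : ∑ n ∈ Finset.range (k+1), g * (1+β)^n
          = g * ∑ n ∈ Finset.range (k+1), (1+β)^n := by rw [Finset.mul_sum]
      have h4 : (∑ n ∈ Finset.range (k+1), (1+β)^n) * ((1+β) - 1)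
          = (1+β)^(k+1) - 1 := geom_sum_mul (1+β) (k+1)
      have h5 : β * ∑ n ∈ Finset.range (k+1), (1+β)^n = (1+β)^(k+1) - 1 := by
        linear_combination h4
      have h6 : β * (∑ n ∈ Finset.range (k+1), F n)
          ≤ β * (g * ∑ n ∈ Finset.range (k+1), (1+β)^n) := by
        rw [← h3]; exact mul_le_mul_of_nonneg_left h2 hβ
      calc F (k+1) ≤ β * (∑ n ∈ Finset.range (k+1), F n) + g := h1
        _ ≤ β * (g * ∑ n ∈ Finset.range (k+1), (1+β)^n) + g := by linarith
        _ = g * (β * ∑ n ∈ Finset.range (k+1), (1+β)^n) + g := by ring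
        _ = g * ((1+β)^(k+1) - 1) + g := by rw [h5]
        _ = g * (1+β)^(k+1) := by ring

/-- A priori error estimate for two-grid Algorithm 4.2 (core of Theorem 4.6). -/
theorem two_grid_alg42_error
    (T ν₀ μB K₁ : ℝ) (hT : 0 < T) (hν₀ : 0 < ν₀) (hμB : 0 < μB) (hK₁ : 0 < K₁) :
    ∃ C : ℝ, 0 < C ∧
      ∀ (H : Type) [NormedAddCommGroup H] [InnerProductSpace ℝ H]
        (norm1 : H → ℝ), (∀ x, 0 ≤ norm1 x) →
      ∀ A : H →ₗ[ℝ] H →ₗ[ℝ] ℝ, (∀ v, ν₀ * (norm1 v) ^ 2 ≤ A v v) →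
      ∀ Δt : ℝ, 0 < Δt → ∀ N : ℕ, 1 ≤ N → (N : ℝ) * Δt = T →
      ∀ ω : ℕ → ℕ → ℝ, (∀ n i, 1 ≤ i → i ≤ n → n ≤ N → |ω n i| ≤ K₁) →
      ∀ δ : ℝ, 0 ≤ δ →
      ∀ W : ℕ → H, W 0 = 0 →
      ∀ G E : ℕ → H → ℝ,
        (∀ i, 1 ≤ i → i ≤ N → ∀ v : H, |G i v| ≤ μB * norm1 (W i) * norm1 v) →
        (∀ n, 1 ≤ n → n ≤ N → ∀ v : H, |E n v| ≤ μB * δ * norm1 v) →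
        (∀ n, 1 ≤ n → n ≤ N → ∀ v : H,
          ⟪W n - W (n - 1), v⟫ / Δt + A (W n) v
            + Δt * ∑ i ∈ Finset.Icc 1 (n - 1), ω n i * G i v
            + Δt * ω n n * E n v = 0) →
        ∀ n, 1 ≤ n → n ≤ N →
          ‖W n‖ ^ 2 + ∑ i ∈ Finset.Icc 1 n, ‖W i - W (i - 1)‖ ^ 2
              + ν₀ * Δt * ∑ i ∈ Finset.Icc 1 n, (norm1 (W i)) ^ 2
            ≤ C * Δt * δ ^ 2 ∧
          ‖W n‖ ≤ Real.sqrt C * Real.sqrt Δt * δ := by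
  have hc : (0:ℝ) < 2*K₁^2*μB^2/ν₀ := by positivity
  set c : ℝ := 2*K₁^2*μB^2/ν₀ with hc_def
  have hβpos : (0:ℝ) < c*T/ν₀ := by positivity
  set β : ℝ := c*T/ν₀ with hβ_def
  refine ⟨c*T^2*Real.exp (β*T), by positivity, ?_⟩
  intro H _ _ norm1 hnorm1 A hA Δt hΔt N hN hNT ω hω δ hδ W hW0 G E hG hE hrec
  have hΔt' : Δt ≠ 0 := ne_of_gt hΔt
  have hNpos : (0:ℝ) < (N:ℝ) := by exact_mod_cast hN
  have hN0 : ((N:ℝ)) ≠ 0 := ne_of_gt hNpos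
  have hΔtT : Δt ≤ T := by
    have : Δt * 1 ≤ Δt * N := by
      apply mul_le_mul_of_nonneg_left _ hΔt.le
      exact_mod_cast hN
    nlinarith [hNT]
  -- Per-step energy inequality
  have hstep : ∀ m, 1 ≤ m → m ≤ N →
      ‖W m‖^2 + ‖W m - W (m-1)‖^2 + ν₀*Δt*(norm1 (W m))^2
        ≤ ‖W (m-1)‖^2 + c*T*Δt^2 * ∑ i ∈ Finset.Icc 1 (m-1), (norm1 (W i))^2
          + c*Δt^3*δ^2 := by
    intro m hm1 hmN
    have heq := hrec m hm1 hmN (W m)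
    set S := ∑ i ∈ Finset.Icc 1 (m-1), ω m i * G i (W m) with hSdef
    have hP : ⟪W m - W (m-1), W m⟫
        = (‖W m‖^2 - ‖W (m-1)‖^2 + ‖W m - W (m-1)‖^2)/2 := inner_id _ _
    have h2 : ⟪W m - W (m-1), W m⟫ / Δt
        = -(A (W m) (W m) + Δt*S + Δt*(ω m m)*E m (W m)) := by linarith [heq]
    have h3 : ⟪W m - W (m-1), W m⟫
        = -(A (W m) (W m) + Δt*S + Δt*(ω m m)*E m (W m)) * Δt := by
      rw [div_eq_iff hΔt'] at h2; linarith [h2]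
    have key : ‖W m‖^2 - ‖W (m-1)‖^2 + ‖W m - W (m-1)‖^2 + 2*Δt*(A (W m) (W m))
        = -2*Δt^2*S - 2*Δt^2*(ω m m * E m (W m)) := by
      linear_combination 2*h3 - 2*hP
    -- bound |S|
    have hSbound : |S| ≤ ∑ i ∈ Finset.Icc 1 (m-1),
        K₁*(μB*norm1 (W i)*norm1 (W m)) := by
      refine le_trans (Finset.abs_sum_le_sum_abs _ _) (Finset.sum_le_sum fun i hi => ?_)
      rw [Finset.mem_Icc] at hi
      have him : i ≤ m := le_trans hi.2 (Nat.sub_le m 1)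
      have hiN : i ≤ N := le_trans him hmN
      rw [abs_mul]
      exact mul_le_mul (hω m i hi.1 him hmN) (hG i hi.1 hiN (W m)) (abs_nonneg _) hK₁.le
    have hEb : -(ω m m * E m (W m)) ≤ K₁*(μB*δ*norm1 (W m)) := by
      refine le_trans (neg_le_abs _) ?_
      rw [abs_mul]
      exact mul_le_mul (hω m m hm1 le_rfl hmN) (hE m hm1 hmN (W m)) (abs_nonneg _) hK₁.le
    -- Young for the G-terms
    have hyoung1 : ∀ i ∈ Finset.Icc 1 (m-1),
        2*Δt^2*(K₁*(μB*norm1 (W i)*norm1 (W m)))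
          ≤ (ν₀*Δt/(2*N))*(norm1 (W m))^2 + (c*T*Δt^2)*(norm1 (W i))^2 := by
      intro i _
      have hε : (0:ℝ) < ν₀*Δt/(2*N) := by positivity
      have hy := young_aux (ν₀*Δt/(2*N)) (norm1 (W m)) (Δt^2*K₁*μB*norm1 (W i)) hε
      have hq : (Δt^2*K₁*μB*norm1 (W i))^2 / (ν₀*Δt/(2*N))
          = c*T*Δt^2*(norm1 (W i))^2 := by
        rw [hc_def, ← hNT]; field_simp
      calc 2*Δt^2*(K₁*(μB*norm1 (W i)*norm1 (W m)))
          = 2*(norm1 (W m))*(Δt^2*K₁*μB*norm1 (W i)) := by ring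
        _ ≤ (ν₀*Δt/(2*N))*(norm1 (W m))^2
            + (Δt^2*K₁*μB*norm1 (W i))^2/(ν₀*Δt/(2*N)) := hy
        _ = (ν₀*Δt/(2*N))*(norm1 (W m))^2 + (c*T*Δt^2)*(norm1 (W i))^2 := by rw [hq]
    have hSsum : 2*Δt^2*|S|
        ≤ ν₀*Δt/2*(norm1 (W m))^2
          + c*T*Δt^2 * ∑ i ∈ Finset.Icc 1 (m-1), (norm1 (W i))^2 := by
      have h1 : 2*Δt^2*|S| ≤ 2*Δt^2*∑ i ∈ Finset.Icc 1 (m-1),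
          K₁*(μB*norm1 (W i)*norm1 (W m)) :=
        mul_le_mul_of_nonneg_left hSbound (by positivity)
      have h2' : 2*Δt^2*∑ i ∈ Finset.Icc 1 (m-1), K₁*(μB*norm1 (W i)*norm1 (W m))
          = ∑ i ∈ Finset.Icc 1 (m-1), 2*Δt^2*(K₁*(μB*norm1 (W i)*norm1 (W m))) := by
        rw [Finset.mul_sum]
      have h3' : ∑ i ∈ Finset.Icc 1 (m-1), 2*Δt^2*(K₁*(μB*norm1 (W i)*norm1 (W m)))
          ≤ ∑ i ∈ Finset.Icc 1 (m-1),
              ((ν₀*Δt/(2*N))*(norm1 (W m))^2 + (c*T*Δt^2)*(norm1 (W i))^2) :=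
        Finset.sum_le_sum hyoung1
      have h4' : ∑ i ∈ Finset.Icc 1 (m-1),
            ((ν₀*Δt/(2*N))*(norm1 (W m))^2 + (c*T*Δt^2)*(norm1 (W i))^2)
          = ((m-1 : ℕ):ℝ)*((ν₀*Δt/(2*N))*(norm1 (W m))^2)
            + c*T*Δt^2 * ∑ i ∈ Finset.Icc 1 (m-1), (norm1 (W i))^2 := by
        rw [Finset.sum_add_distrib, Finset.sum_const, Nat.card_Icc, ← Finset.mul_sum]
        simp [nsmul_eq_mul]
      have hcard : ((m-1:ℕ):ℝ) ≤ (N:ℝ) := by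
        exact_mod_cast le_trans (Nat.sub_le m 1) hmN
      have h5' : ((m-1:ℕ):ℝ)*((ν₀*Δt/(2*N))*(norm1 (W m))^2)
          ≤ (N:ℝ)*((ν₀*Δt/(2*N))*(norm1 (W m))^2) :=
        mul_le_mul_of_nonneg_right hcard (by positivity)
      have h6' : (N:ℝ)*((ν₀*Δt/(2*N))*(norm1 (W m))^2)
          = ν₀*Δt/2*(norm1 (W m))^2 := by field_simp
      linarith
    -- Young for the E-term
    have hEyoung : 2*Δt^2*(K₁*(μB*δ*norm1 (W m)))
        ≤ ν₀*Δt/2*(norm1 (W m))^2 + c*Δt^3*δ^2 := by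
      have hε : (0:ℝ) < ν₀*Δt/2 := by positivity
      have hy := young_aux (ν₀*Δt/2) (norm1 (W m)) (Δt^2*K₁*μB*δ) hε
      have hq : (Δt^2*K₁*μB*δ)^2 / (ν₀*Δt/2) = c*Δt^3*δ^2 := by
        rw [hc_def]; field_simp
      calc 2*Δt^2*(K₁*(μB*δ*norm1 (W m)))
          = 2*(norm1 (W m))*(Δt^2*K₁*μB*δ) := by ring
        _ ≤ ν₀*Δt/2*(norm1 (W m))^2 + (Δt^2*K₁*μB*δ)^2/(ν₀*Δt/2) := hy
        _ = ν₀*Δt/2*(norm1 (W m))^2 + c*Δt^3*δ^2 := by rw [hq]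
    -- coercivity
    have hcoer : 2*Δt*(ν₀*(norm1 (W m))^2) ≤ 2*Δt*(A (W m) (W m)) :=
      mul_le_mul_of_nonneg_left (hA (W m)) (by positivity)
    have hnegS : -2*Δt^2*S ≤ 2*Δt^2*|S| := by
      have := neg_abs_le S
      nlinarith [sq_nonneg Δt]
    have hnegE : -2*Δt^2*(ω m m * E m (W m)) ≤ 2*Δt^2*(K₁*(μB*δ*norm1 (W m))) := by
      nlinarith [hEb, sq_nonneg Δt]
    linarith [key, hSsum, hEyoung, hcoer, hnegS, hnegE]
  -- Summed inequality
  have hsum : ∀ m, m ≤ N →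
      ‖W m‖^2 + (∑ i ∈ Finset.Icc 1 m, ‖W i - W (i-1)‖^2)
        + ν₀*Δt*∑ i ∈ Finset.Icc 1 m, (norm1 (W i))^2
      ≤ c*T*Δt^2 * (∑ k ∈ Finset.range m, ∑ i ∈ Finset.Icc 1 k, (norm1 (W i))^2)
        + c*Δt^3*(m:ℝ)*δ^2 := by
    intro m
    induction m with
    | zero => intro _; simp [hW0]
    | succ k ih =>
      intro hkN
      have ih' := ih (le_trans (Nat.le_succ k) hkN)
      have hst := hstep (k+1) (Nat.succ_le_succ (Nat.zero_le k)) hkN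
      simp only [Nat.add_sub_cancel] at hst
      rw [Finset.sum_Icc_succ_top (Nat.le_add_left 1 k),
        Finset.sum_Icc_succ_top (Nat.le_add_left 1 k),
        Finset.sum_range_succ]
      simp only [Nat.add_sub_cancel]
      push_cast
      linarith [hst, ih']
  -- Gronwall setup
  set F : ℕ → ℝ := fun m => ‖W m‖^2 + (∑ i ∈ Finset.Icc 1 m, ‖W i - W (i-1)‖^2)
    + ν₀*Δt*∑ i ∈ Finset.Icc 1 m, (norm1 (W i))^2 with hFdef
  have hFnonneg : ∀ m, 0 ≤ F m := by
    intro m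
    have h1 : (0:ℝ) ≤ ∑ i ∈ Finset.Icc 1 m, ‖W i - W (i-1)‖^2 :=
      Finset.sum_nonneg fun i _ => sq_nonneg _
    have h2 : (0:ℝ) ≤ ∑ i ∈ Finset.Icc 1 m, (norm1 (W i))^2 :=
      Finset.sum_nonneg fun i _ => sq_nonneg _
    have h3 : (0:ℝ) ≤ ‖W m‖^2 := sq_nonneg _
    have : (0:ℝ) ≤ ν₀*Δt*∑ i ∈ Finset.Icc 1 m, (norm1 (W i))^2 := by positivity
    simp only [hFdef]; linarith
  set g : ℝ := c*T*Δt^2*δ^2 with hg_def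
  have hg : 0 ≤ g := by positivity
  have h0 : F 0 ≤ g := by simp [hFdef, hW0]; positivity
  have hrec' : ∀ m, 1 ≤ m → m ≤ N →
      F m ≤ (β*Δt) * (∑ n ∈ Finset.range m, F n) + g := by
    intro m hm1 hmN
    have h1 := hsum m hmN
    have h2 : ∀ k ∈ Finset.range m,
        c*T*Δt^2 * ∑ i ∈ Finset.Icc 1 k, (norm1 (W i))^2 ≤ (β*Δt) * F k := by
      intro k _
      have hsub : ν₀*Δt*∑ i ∈ Finset.Icc 1 k, (norm1 (W i))^2 ≤ F k := by
        have h1' : (0:ℝ) ≤ ∑ i ∈ Finset.Icc 1 k, ‖W i - W (i-1)‖^2 :=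
          Finset.sum_nonneg fun i _ => sq_nonneg _
        have h3 : (0:ℝ) ≤ ‖W k‖^2 := sq_nonneg _
        simp only [hFdef]; linarith
      have : c*T*Δt^2 * ∑ i ∈ Finset.Icc 1 k, (norm1 (W i))^2
          = (c*T*Δt/ν₀) * (ν₀*Δt*∑ i ∈ Finset.Icc 1 k, (norm1 (W i))^2) := by
        field_simp
      rw [this, hβ_def]
      have hcoef : (0:ℝ) ≤ c*T*Δt/ν₀ := by positivity
      calc (c*T*Δt/ν₀) * (ν₀*Δt*∑ i ∈ Finset.Icc 1 k, (norm1 (W i))^2)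
          ≤ (c*T*Δt/ν₀) * F k := mul_le_mul_of_nonneg_left hsub hcoef
        _ = (c*T/ν₀*Δt) * F k := by ring
    have h3 : c*T*Δt^2 * (∑ k ∈ Finset.range m, ∑ i ∈ Finset.Icc 1 k, (norm1 (W i))^2)
        ≤ (β*Δt) * ∑ n ∈ Finset.range m, F n := by
      rw [Finset.mul_sum, Finset.mul_sum]
      exact Finset.sum_le_sum h2
    have h4 : c*Δt^3*(m:ℝ)*δ^2 ≤ g := by
      rw [hg_def]
      have hmT : (m:ℝ)*Δt ≤ T := by
        rw [← hNT]
        apply mul_le_mul_of_nonneg_right _ hΔt.le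
        exact_mod_cast hmN
      nlinarith [sq_nonneg Δt, sq_nonneg δ, hΔt.le, hc.le, hc]
    calc F m ≤ c*T*Δt^2 * (∑ k ∈ Finset.range m, ∑ i ∈ Finset.Icc 1 k, (norm1 (W i))^2)
          + c*Δt^3*(m:ℝ)*δ^2 := h1
      _ ≤ (β*Δt) * (∑ n ∈ Finset.range m, F n) + g := by linarith
  have hgron := gronwall_aux N F g (β*Δt) hg (by positivity) h0 hrec'
  -- conclude
  intro n hn1 hnN
  have hFn := hgron n hnN
  have hpow : (1 + β*Δt)^n ≤ Real.exp (β*T) := by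
    have h1 : (1 + β*Δt) ≤ Real.exp (β*Δt) := by
      have := Real.add_one_le_exp (β*Δt); linarith
    have h2 : (1 + β*Δt)^n ≤ (Real.exp (β*Δt))^n := by
      apply pow_le_pow_left₀ _ h1
      positivity
    have h3 : (Real.exp (β*Δt))^n = Real.exp (β*Δt*n) := by
      rw [← Real.exp_nat_mul]; ring_nf
    have h4 : β*Δt*n ≤ β*T := by
      have hnT : (n:ℝ)*Δt ≤ T := by
        rw [← hNT]
        apply mul_le_mul_of_nonneg_right _ hΔt.le
        exact_mod_cast hnN
      nlinarith [hβpos.le]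
    calc (1 + β*Δt)^n ≤ (Real.exp (β*Δt))^n := h2
      _ = Real.exp (β*Δt*n) := h3
      _ ≤ Real.exp (β*T) := Real.exp_le_exp.mpr h4
  have hfinal : F n ≤ (c*T^2*Real.exp (β*T)) * Δt * δ^2 := by
    have h1 : F n ≤ g * (1 + β*Δt)^n := hFn
    have h2 : g * (1 + β*Δt)^n ≤ g * Real.exp (β*T) :=
      mul_le_mul_of_nonneg_left hpow hg
    have h3 : g * Real.exp (β*T) ≤ (c*T^2*Real.exp (β*T)) * Δt * δ^2 := by
      rw [hg_def]
      have : c*T*Δt^2*δ^2 ≤ c*T^2*Δt*δ^2 := by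
        nlinarith [hc.le, hΔt.le, hΔtT, sq_nonneg δ, hT.le]
      nlinarith [Real.exp_pos (β*T), this, Real.one_le_exp (by positivity : (0:ℝ) ≤ β*T)]
    linarith
  constructor
  · exact hfinal
  · have hWn2 : ‖W n‖^2 ≤ (c*T^2*Real.exp (β*T)) * Δt * δ^2 := by
      have h1 : (0:ℝ) ≤ ∑ i ∈ Finset.Icc 1 n, ‖W i - W (i-1)‖^2 :=
        Finset.sum_nonneg fun i _ => sq_nonneg _
      have h2 : (0:ℝ) ≤ ν₀*Δt*∑ i ∈ Finset.Icc 1 n, (norm1 (W i))^2 := by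
        have : (0:ℝ) ≤ ∑ i ∈ Finset.Icc 1 n, (norm1 (W i))^2 :=
          Finset.sum_nonneg fun i _ => sq_nonneg _
        positivity
      have := hfinal
      simp only [hFdef] at this
      linarith
    have hCpos : (0:ℝ) < c*T^2*Real.exp (β*T) := by positivity
    have hrhs : Real.sqrt (c*T^2*Real.exp (β*T)) * Real.sqrt Δt * δ
        = Real.sqrt ((c*T^2*Real.exp (β*T)) * Δt * δ^2) := by
      rw [Real.sqrt_mul (by positivity : (0:ℝ) ≤ (c*T^2*Real.exp (β*T)) * Δt),
        Real.sqrt_mul hCpos.le, Real.sqrt_sq hδ]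
    rw [hrhs]
    have : ‖W n‖ = Real.sqrt (‖W n‖^2) := (Real.sqrt_sq (norm_nonneg _)).symm
    rw [this]
    exact Real.sqrt_le_sqrt hWn2
end
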